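/- arXiv:1112.1824 — 10 statements merged into one kernel-verified Lean document; each statement's English description precedes it below -/
import Mathlib

section
/- A metrizable locally convex space has the countable neighbourhood property if and only if it is normable. -/
open Topology Filter Set


/-- A locally convex space `E` has the *countable neighbourhood property* (cnp) if every
countable family of continuous seminorms on `E` has an upper bound in the pre-order
`p ⪯ q ⟺ ∃ C > 0, p ≤ C·q`. -/
def CountableNeighbourhoodProperty (E : Type*)
    [AddCommGroup E] [Module ℝ E] [TopologicalSpace E] : Prop :=
  ∀ p : ℕ → Seminorm ℝ E, (∀ n, Continuous (p n)) →
    ∃ q : Seminorm ℝ E, Continuous q ∧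
      ∀ n, ∃ C : ℝ, 0 < C ∧ ∀ x, p n x ≤ C * q x

/-- A metrizable locally convex space has the countable neighbourhood property if and
only if it is normable, i.e. there is a continuous norm `N` on `E` defining the
topology (equivalently: dominating every continuous seminorm). -/
theorem metrizable_cnp_iff_normable {E : Type*}
    [AddCommGroup E] [Module ℝ E] [TopologicalSpace E]
    [IsTopologicalAddGroup E] [ContinuousSMul ℝ E] [LocallyConvexSpace ℝ E] [T2Space E]
    [TopologicalSpace.MetrizableSpace E] :
    CountableNeighbourhoodProperty E ↔
      ∃ N : Seminorm ℝ E, Continuous N ∧ (∀ x, N x = 0 → x = 0) ∧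
        ∀ p : Seminorm ℝ E, Continuous p → ∃ C : ℝ, 0 < C ∧ ∀ x, p x ≤ C * N x := by
  constructor
  · intro h
    -- get a countable antitone basis of `𝓝 0`
    obtain ⟨b, hb⟩ := (𝓝 (0 : E)).exists_antitone_basis
    -- inside each `b n` choose an absolutely convex open neighbourhood `V n`
    have hV : ∀ n : ℕ, ∃ V : Set E,
        ((0 : E) ∈ V ∧ IsOpen V ∧ AbsConvex ℝ V) ∧ V ⊆ b n := fun n =>
      (nhds_hasBasis_absConvex_open ℝ E).mem_iff.mp (hb.mem n)
    choose V hVprop hVsub using hV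
    have hV0 : ∀ n, (0 : E) ∈ V n := fun n => (hVprop n).1
    have hVopen : ∀ n, IsOpen (V n) := fun n => (hVprop n).2.1
    have hVbal : ∀ n, Balanced ℝ (V n) := fun n => (hVprop n).2.2.1
    have hVconv : ∀ n, Convex ℝ (V n) := fun n => (hVprop n).2.2.2
    have hVnhds : ∀ n, V n ∈ 𝓝 (0 : E) := fun n => (hVopen n).mem_nhds (hV0 n)
    have hVabs : ∀ n, Absorbent ℝ (V n) := fun n => absorbent_nhds_zero (hVnhds n)
    set p : ℕ → Seminorm ℝ E :=
      fun n => gaugeSeminorm (hVbal n) (hVconv n) (hVabs n) with hp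
    have hpball : ∀ n, (p n).ball 0 1 = V n := fun n =>
      gaugeSeminorm_ball_one (hVopen n)
    have hpc : ∀ n, Continuous (p n) := by
      intro n
      refine Seminorm.continuous (r := 1) ?_
      rw [hpball n]
      exact hVnhds n
    obtain ⟨q, hqc, hq⟩ := h p hpc
    refine ⟨q, hqc, ?_, ?_⟩
    · -- `q` is a norm
      intro x hx
      by_contra hx0
      have hxmem : ∀ n, x ∈ b n := by
        intro n
        obtain ⟨C, hC, hCle⟩ := hq n
        have : p n x ≤ 0 := by
          have := hCle x
          rw [hx, mul_zero] at this
          exact this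
        have hx1 : x ∈ (p n).ball 0 1 := by
          rw [Seminorm.mem_ball_zero]
          exact lt_of_le_of_lt this one_pos
        exact hVsub n (by rwa [hpball n] at hx1)
      have : ({x}ᶜ : Set E) ∈ 𝓝 (0 : E) :=
        isOpen_compl_singleton.mem_nhds (by simpa using (Ne.symm hx0))
      obtain ⟨n, -, hn⟩ := hb.toHasBasis.mem_iff.mp this
      exact hn (hxmem n) rfl
    · -- `q` dominates every continuous seminorm
      intro r hr
      have hball : r.ball 0 1 ∈ 𝓝 (0 : E) :=
        (Seminorm.ball_mem_nhds hr one_pos)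
      obtain ⟨n, -, hn⟩ := hb.toHasBasis.mem_iff.mp hball
      have hVn : V n ⊆ r.ball 0 1 := (hVsub n).trans hn
      obtain ⟨C, hC, hCle⟩ := hq n
      refine ⟨C, hC, fun x => ?_⟩
      have h1 : r x = gauge (r.ball 0 1) x := by
        conv_lhs => rw [← r.gaugeSeminorm_ball]
        rfl
      have h2 : gauge (r.ball 0 1) x ≤ gauge (V n) x :=
        gauge_mono (hVabs n) hVn x
      have h3 : gauge (V n) x = p n x := rfl
      calc r x = gauge (r.ball 0 1) x := h1
        _ ≤ p n x := h2.trans_eq h3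
        _ ≤ C * q x := hCle x
  · rintro ⟨N, hNc, -, hNdom⟩
    intro p hp
    refine ⟨N, hNc, fun n => hNdom (p n) (hp n)⟩
end

section
/- If E has the θ-neighbourhood property for an infinite cardinal θ and F ⊆ E is a closed vector subspace, then the quotient space E/F has the θ-neighbourhood property. -/
universe u

/-- A locally convex space `E` has the *θ-neighbourhood property* for a cardinal `θ` if
every set `M` of continuous seminorms on `E` with `#M ≤ θ` has an upper bound in the
pre-order `p ⪯ q ⟺ ∃ C > 0, p ≤ C·q`. -/
def ThetaNeighbourhoodProperty (θ : Cardinal.{u}) (E : Type u)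
    [AddCommGroup E] [Module ℝ E] [TopologicalSpace E] : Prop :=
  ∀ M : Set (Seminorm ℝ E), (∀ p ∈ M, Continuous p) → Cardinal.mk M ≤ θ →
    ∃ q : Seminorm ℝ E, Continuous q ∧
      ∀ p ∈ M, ∃ C : ℝ, 0 < C ∧ ∀ x, p x ≤ C * q x

section Aux

open Pointwise

variable {E : Type u} [AddCommGroup E] [Module ℝ E] (F : Submodule ℝ E) (q : Seminorm ℝ E)

/-- The fiber values of `q` over a point of the quotient. -/
def fiberSet (x : E ⧸ F) : Set ℝ := q '' (F.mkQ ⁻¹' {x})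

lemma fiberSet_nonempty (x : E ⧸ F) : (fiberSet F q x).Nonempty := by
  obtain ⟨y, rfl⟩ := Submodule.mkQ_surjective F x
  exact ⟨q y, y, rfl, rfl⟩

lemma fiberSet_bddBelow (x : E ⧸ F) : BddBelow (fiberSet F q x) :=
  ⟨0, fun r hr => by obtain ⟨y, -, rfl⟩ := hr; exact apply_nonneg q y⟩

/-- The quotient function. -/
noncomputable def quotFun (x : E ⧸ F) : ℝ := sInf (fiberSet F q x)

lemma quotFun_nonneg (x : E ⧸ F) : 0 ≤ quotFun F q x :=
  le_csInf (fiberSet_nonempty F q x)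
    (fun r hr => by obtain ⟨y, -, rfl⟩ := hr; exact apply_nonneg q y)

lemma quotFun_le (y : E) : quotFun F q (F.mkQ y) ≤ q y :=
  csInf_le (fiberSet_bddBelow F q _) ⟨y, rfl, rfl⟩

lemma quotFun_add_le (x y : E ⧸ F) :
    quotFun F q (x + y) ≤ quotFun F q x + quotFun F q y := by
  refine le_of_forall_pos_le_add fun ε hε => ?_
  have hx : quotFun F q x < quotFun F q x + ε / 2 := by linarith
  have hy : quotFun F q y < quotFun F q y + ε / 2 := by linarith
  obtain ⟨a, ⟨ya, hya, rfl⟩, ha⟩ := exists_lt_of_csInf_lt (fiberSet_nonempty F q x) hx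
  obtain ⟨b, ⟨yb, hyb, rfl⟩, hb⟩ := exists_lt_of_csInf_lt (fiberSet_nonempty F q y) hy
  simp only [Set.mem_preimage, Set.mem_singleton_iff] at hya hyb
  have hmk : F.mkQ (ya + yb) = x + y := by rw [map_add, hya, hyb]
  calc quotFun F q (x + y) ≤ q (ya + yb) := hmk ▸ quotFun_le F q (ya + yb)
    _ ≤ q ya + q yb := map_add_le_add q ya yb
    _ ≤ quotFun F q x + quotFun F q y + ε := by linarith

lemma quotFun_zero : quotFun F q 0 = 0 := by
  have h1 : quotFun F q (F.mkQ 0) ≤ q 0 := quotFun_le F q 0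
  rw [map_zero, map_zero] at h1
  exact le_antisymm h1 (quotFun_nonneg F q 0)

lemma fiberSet_smul (c : ℝ) (hc : c ≠ 0) (x : E ⧸ F) :
    fiberSet F q (c • x) = |c| • fiberSet F q x := by
  ext r
  constructor
  · rintro ⟨y, hy, rfl⟩
    simp only [Set.mem_preimage, Set.mem_singleton_iff] at hy
    refine ⟨q (c⁻¹ • y), ⟨c⁻¹ • y, ?_, rfl⟩, ?_⟩
    · simp only [Set.mem_preimage, Set.mem_singleton_iff, map_smul, hy, smul_smul,
        inv_mul_cancel₀ hc, one_smul]
    · show |c| • q (c⁻¹ • y) = q y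
      rw [smul_eq_mul, map_smul_eq_mul, norm_inv, Real.norm_eq_abs]
      field_simp
  · rintro ⟨r, ⟨y, hy, rfl⟩, rfl⟩
    simp only [Set.mem_preimage, Set.mem_singleton_iff] at hy
    refine ⟨c • y, ?_, ?_⟩
    · simp [hy]
    · show q (c • y) = |c| • q y
      rw [map_smul_eq_mul, Real.norm_eq_abs, smul_eq_mul]

lemma quotFun_smul (c : ℝ) (x : E ⧸ F) :
    quotFun F q (c • x) = ‖c‖ * quotFun F q x := by
  rcases eq_or_ne c 0 with rfl | hc
  · simp [quotFun_zero F q]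
  · rw [quotFun, fiberSet_smul F q c hc, Real.sInf_smul_of_nonneg (abs_nonneg c),
      Real.norm_eq_abs, smul_eq_mul, quotFun]

/-- The quotient seminorm. -/
noncomputable def quotSeminorm : Seminorm ℝ (E ⧸ F) :=
  Seminorm.ofSMulLE (quotFun F q) (quotFun_zero F q) (quotFun_add_le F q)
    (fun c x => le_of_eq (by rw [quotFun_smul F q c x, Real.norm_eq_abs]))

lemma quotSeminorm_apply (x : E ⧸ F) : quotSeminorm F q x = quotFun F q x := rfl

end Aux

/-- If a locally convex space `E` has the θ-neighbourhood property for an infinite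
cardinal θ and `F ⊆ E` is a closed vector subspace, then the quotient `E ⧸ F`
(with the quotient topology) has the θ-neighbourhood property. -/
theorem quotient_thetaNP {E : Type u}
    [AddCommGroup E] [Module ℝ E] [TopologicalSpace E]
    [IsTopologicalAddGroup E] [ContinuousSMul ℝ E] [LocallyConvexSpace ℝ E] [T2Space E]
    (θ : Cardinal.{u}) (hθ : Cardinal.aleph0 ≤ θ)
    (hE : ThetaNeighbourhoodProperty θ E)
    (F : Submodule ℝ E) (hF : IsClosed (F : Set E)) :
    ThetaNeighbourhoodProperty θ (E ⧸ F) := by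
  intro M hMcont hMcard
  -- pull back the seminorms to `E`
  set Φ : Seminorm ℝ (E ⧸ F) → Seminorm ℝ E := fun p => p.comp F.mkQ with hΦ
  have hmkQcont : Continuous (F.mkQ : E → E ⧸ F) := continuous_quot_mk
  have hM'cont : ∀ p' ∈ Φ '' M, Continuous p' := by
    rintro p' ⟨p, hp, rfl⟩
    exact (hMcont p hp).comp hmkQcont
  have hM'card : Cardinal.mk (Φ '' M) ≤ θ := le_trans (Cardinal.mk_image_le) hMcard
  obtain ⟨q, hqcont, hqdom⟩ := hE (Φ '' M) hM'cont hM'card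
  refine ⟨quotSeminorm F q, ?_, ?_⟩
  · -- continuity of the quotient seminorm
    refine Seminorm.continuous_of_forall fun r hr => ?_
    have hopen : IsOpen (q.ball 0 r) := by
      rw [Seminorm.ball_zero_eq]
      exact isOpen_lt hqcont continuous_const
    have himg : IsOpen ((F.mkQ : E → E ⧸ F) '' q.ball 0 r) :=
      Submodule.isOpenMap_mkQ F _ hopen
    have h0 : (0 : E ⧸ F) ∈ (F.mkQ : E → E ⧸ F) '' q.ball 0 r :=
      ⟨0, q.mem_ball_self hr, map_zero _⟩
    refine Filter.mem_of_superset (himg.mem_nhds h0) ?_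
    rintro x ⟨y, hy, rfl⟩
    rw [Seminorm.mem_ball_zero] at hy ⊢
    exact lt_of_le_of_lt (quotFun_le F q y) hy
  · -- domination
    intro p hp
    obtain ⟨C, hC, hdom⟩ := hqdom (Φ p) ⟨p, hp, rfl⟩
    refine ⟨C, hC, fun x => ?_⟩
    rw [quotSeminorm_apply, quotFun]
    rw [show C * sInf (fiberSet F q x) = sInf (fiberSet F q x) * C from mul_comm _ _,
      ← div_le_iff₀ hC]
    refine le_csInf (fiberSet_nonempty F q x) ?_
    rintro r ⟨y, hy, rfl⟩
    simp only [Set.mem_preimage, Set.mem_singleton_iff] at hy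
    rw [div_le_iff₀ hC, mul_comm]
    have := hdom y
    simp only [hΦ, Seminorm.comp_apply] at this
    rw [← hy]
    exact this
end

section
/- Let E₁, E₂, F be locally convex spaces and β : E₁ × E₂ → F be a continuous bilinear map. If both E₁ and E₂ have the countable neighbourhood property, then β admits product estimates. -/
open Filter Topology Set


/-- A bilinear map (given as a function) `β : E₁ × E₂ → F` *admits product estimates*
if for every double sequence `(p i j)` of continuous seminorms on `F` there exist
sequences `(P i)`, `(Q j)` of continuous seminorms on `E₁`, `E₂` with
`p i j (β x y) ≤ P i x * Q j y` for all `i, j, x, y`. -/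
def ProductEstimates {E₁ E₂ F : Type*}
    [AddCommGroup E₁] [Module ℝ E₁] [TopologicalSpace E₁]
    [AddCommGroup E₂] [Module ℝ E₂] [TopologicalSpace E₂]
    [AddCommGroup F] [Module ℝ F] [TopologicalSpace F]
    (β : E₁ → E₂ → F) : Prop :=
  ∀ p : ℕ → ℕ → Seminorm ℝ F, (∀ i j, Continuous (p i j)) →
    ∃ (P : ℕ → Seminorm ℝ E₁) (Q : ℕ → Seminorm ℝ E₂),
      (∀ i, Continuous (P i)) ∧ (∀ j, Continuous (Q j)) ∧
      ∀ (i j : ℕ) (x : E₁) (y : E₂), p i j (β x y) ≤ P i x * Q j y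

/-- A continuous bilinear map is bounded by a product of continuous seminorms. -/
lemma bilin_seminorm_bound {E₁ E₂ F : Type*}
    [AddCommGroup E₁] [Module ℝ E₁] [TopologicalSpace E₁]
    [IsTopologicalAddGroup E₁] [ContinuousSMul ℝ E₁] [LocallyConvexSpace ℝ E₁]
    [AddCommGroup E₂] [Module ℝ E₂] [TopologicalSpace E₂]
    [IsTopologicalAddGroup E₂] [ContinuousSMul ℝ E₂] [LocallyConvexSpace ℝ E₂]
    [AddCommGroup F] [Module ℝ F] [TopologicalSpace F]
    (β : E₁ →ₗ[ℝ] E₂ →ₗ[ℝ] F)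
    (hβ : Continuous (fun xy : E₁ × E₂ => β xy.1 xy.2))
    (p : Seminorm ℝ F) (hp : Continuous p) :
    ∃ (P : Seminorm ℝ E₁) (Q : Seminorm ℝ E₂), Continuous P ∧ Continuous Q ∧
      ∀ x y, p (β x y) ≤ P x * Q y := by
  have hW : p.ball 0 1 ∈ 𝓝 (0 : F) := by
    rw [Seminorm.ball_zero_eq]
    exact (isOpen_lt hp continuous_const).mem_nhds (by simp)
  have h0 : (fun xy : E₁ × E₂ => β xy.1 xy.2) ⁻¹' (p.ball 0 1) ∈ 𝓝 ((0 : E₁), (0 : E₂)) := by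
    have := hβ.continuousAt (x := ((0 : E₁), (0 : E₂)))
    have h00 : β (0 : E₁) (0 : E₂) = 0 := by simp
    exact this (by rw [h00] at *; simpa using hW)
  rw [mem_nhds_prod_iff] at h0
  obtain ⟨U₀, hU₀, V₀, hV₀, hUV⟩ := h0
  obtain ⟨U, ⟨hU0, hUopen, hUbal, hUconv⟩, hUsub⟩ :=
    (nhds_hasBasis_absConvex_open ℝ E₁).mem_iff.mp hU₀
  obtain ⟨V, ⟨hV0, hVopen, hVbal, hVconv⟩, hVsub⟩ :=
    (nhds_hasBasis_absConvex_open ℝ E₂).mem_iff.mp hV₀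
  have hUnhds : U ∈ 𝓝 (0 : E₁) := hUopen.mem_nhds hU0
  have hVnhds : V ∈ 𝓝 (0 : E₂) := hVopen.mem_nhds hV0
  set P : Seminorm ℝ E₁ := gaugeSeminorm hUbal hUconv (absorbent_nhds_zero hUnhds)
  set Q : Seminorm ℝ E₂ := gaugeSeminorm hVbal hVconv (absorbent_nhds_zero hVnhds)
  have hPball : P.ball 0 1 = U := gaugeSeminorm_ball_one hUopen
  have hQball : Q.ball 0 1 = V := gaugeSeminorm_ball_one hVopen
  have hPc : Continuous P := Seminorm.continuous (r := 1) (hPball ▸ hUnhds)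
  have hQc : Continuous Q := Seminorm.continuous (r := 1) (hQball ▸ hVnhds)
  refine ⟨P, Q, hPc, hQc, fun x y => ?_⟩
  have key : ∀ t s : ℝ, P x < t → Q y < s → p (β x y) ≤ t * s := by
    intro t s hxt hys
    have ht : 0 < t := lt_of_le_of_lt (apply_nonneg P x) hxt
    have hs : 0 < s := lt_of_le_of_lt (apply_nonneg Q y) hys
    have hxU : t⁻¹ • x ∈ U := by
      rw [← hPball]
      simp only [Seminorm.mem_ball, sub_zero, map_smul_eq_mul]
      rw [Real.norm_eq_abs, abs_of_pos (inv_pos.mpr ht), inv_mul_lt_iff₀ ht, mul_one]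
      exact hxt
    have hyV : s⁻¹ • y ∈ V := by
      rw [← hQball]
      simp only [Seminorm.mem_ball, sub_zero, map_smul_eq_mul]
      rw [Real.norm_eq_abs, abs_of_pos (inv_pos.mpr hs), inv_mul_lt_iff₀ hs, mul_one]
      exact hys
    have hmem : β (t⁻¹ • x) (s⁻¹ • y) ∈ p.ball 0 1 :=
      hUV (Set.mk_mem_prod (hUsub hxU) (hVsub hyV))
    rw [Seminorm.mem_ball, sub_zero] at hmem
    have heq : β (t⁻¹ • x) (s⁻¹ • y) = (t⁻¹ * s⁻¹) • β x y := by
      rw [map_smul, LinearMap.map_smul₂, smul_smul, mul_comm]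
    rw [heq, map_smul_eq_mul, Real.norm_eq_abs, abs_of_pos (by positivity)] at hmem
    calc p (β x y) = (t * s) * ((t⁻¹ * s⁻¹) * p (β x y)) := by
          field_simp
      _ ≤ (t * s) * 1 := by
          apply mul_le_mul_of_nonneg_left hmem.le (by positivity)
      _ = t * s := mul_one _
  have tendsto : Tendsto (fun ε : ℝ => (P x + ε) * (Q y + ε)) (𝓝[>] 0) (𝓝 (P x * Q y)) := by
    have : Tendsto (fun ε : ℝ => (P x + ε) * (Q y + ε)) (𝓝 0) (𝓝 ((P x + 0) * (Q y + 0))) :=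
      (((continuous_const.add continuous_id).mul
        (continuous_const.add continuous_id)).tendsto 0)
    simpa using this.mono_left nhdsWithin_le_nhds
  refine ge_of_tendsto tendsto ?_
  filter_upwards [self_mem_nhdsWithin] with ε (hε : 0 < ε)
  exact key _ _ (lt_add_of_pos_right _ hε) (lt_add_of_pos_right _ hε)


lemma exists_dominating_seq (D : ℕ → ℕ → ℝ) :
    ∃ A : ℕ → ℝ, (∀ n, 1 ≤ A n) ∧ ∀ i j, D i j ≤ A i * A j := by
  set A : ℕ → ℝ := fun n =>
    1 + ∑ kl ∈ Finset.range (n + 1) ×ˢ Finset.range (n + 1), |D kl.1 kl.2| with hAdef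
  have hA1 : ∀ n, 1 ≤ A n := fun n => le_add_of_nonneg_right (by positivity)
  have hmono : Monotone A := by
    intro i j hij
    apply add_le_add_right
    apply Finset.sum_le_sum_of_subset_of_nonneg
    · exact Finset.product_subset_product
        (Finset.range_subset_range.mpr (by omega)) (Finset.range_subset_range.mpr (by omega))
    · intros; positivity
  have hDA : ∀ i j, D i j ≤ A (max i j) := by
    intro i j
    have hmem : ((i, j) : ℕ × ℕ) ∈
        Finset.range (max i j + 1) ×ˢ Finset.range (max i j + 1) := by
      simp [Nat.lt_succ_iff]
    calc D i j ≤ |D i j| := le_abs_self _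
      _ ≤ ∑ kl ∈ Finset.range (max i j + 1) ×ˢ Finset.range (max i j + 1), |D kl.1 kl.2| :=
        Finset.single_le_sum (f := fun kl : ℕ × ℕ => |D kl.1 kl.2|) (fun _ _ => abs_nonneg _) hmem
      _ ≤ A (max i j) := le_add_of_nonneg_left zero_le_one
  refine ⟨A, hA1, fun i j => ?_⟩
  refine (hDA i j).trans ?_
  rcases le_total i j with h | h
  · rw [max_eq_right h]
    nlinarith [hA1 i, hA1 j]
  · rw [max_eq_left h]
    nlinarith [hA1 i, hA1 j]

/-- If `E₁` and `E₂` have the countable neighbourhood property, then every continuous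
bilinear map `β : E₁ × E₂ → F` into a locally convex space admits product estimates. -/
theorem productEstimates_of_cnp_domains {E₁ E₂ F : Type*}
    [AddCommGroup E₁] [Module ℝ E₁] [TopologicalSpace E₁]
    [IsTopologicalAddGroup E₁] [ContinuousSMul ℝ E₁] [LocallyConvexSpace ℝ E₁] [T2Space E₁]
    [AddCommGroup E₂] [Module ℝ E₂] [TopologicalSpace E₂]
    [IsTopologicalAddGroup E₂] [ContinuousSMul ℝ E₂] [LocallyConvexSpace ℝ E₂] [T2Space E₂]
    [AddCommGroup F] [Module ℝ F] [TopologicalSpace F]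
    [IsTopologicalAddGroup F] [ContinuousSMul ℝ F] [LocallyConvexSpace ℝ F] [T2Space F]
    (β : E₁ →ₗ[ℝ] E₂ →ₗ[ℝ] F)
    (hβ : Continuous (fun xy : E₁ × E₂ => β xy.1 xy.2))
    (h₁ : CountableNeighbourhoodProperty E₁)
    (h₂ : CountableNeighbourhoodProperty E₂) :
    ProductEstimates (fun x y => β x y) := by
  intro p hp
  choose P' Q' hP'c hQ'c hbound using fun i j => bilin_seminorm_bound β hβ (p i j) (hp i j)
  obtain ⟨P₀, hP₀c, hP₀⟩ := h₁ (fun n => P' n.unpair.1 n.unpair.2) (fun n => hP'c _ _)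
  obtain ⟨Q₀, hQ₀c, hQ₀⟩ := h₂ (fun n => Q' n.unpair.1 n.unpair.2) (fun n => hQ'c _ _)
  have hP₀' : ∀ i j, ∃ C : ℝ, 0 < C ∧ ∀ x, P' i j x ≤ C * P₀ x := fun i j => by
    simpa [Nat.unpair_pair] using hP₀ (Nat.pair i j)
  have hQ₀' : ∀ i j, ∃ C : ℝ, 0 < C ∧ ∀ y, Q' i j y ≤ C * Q₀ y := fun i j => by
    simpa [Nat.unpair_pair] using hQ₀ (Nat.pair i j)
  choose C hCpos hC using hP₀'
  choose D hDpos hD using hQ₀'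
  obtain ⟨A, hA1, hA⟩ := exists_dominating_seq (fun i j => C i j * D i j)
  have hA0 : ∀ n, (0 : ℝ) ≤ A n := fun n => zero_le_one.trans (hA1 n)
  refine ⟨fun i => (A i).toNNReal • P₀, fun j => (A j).toNNReal • Q₀, ?_, ?_, ?_⟩
  · intro i
    have : ⇑((A i).toNNReal • P₀) = fun x => A i * P₀ x := by
      funext x
      simp [Seminorm.smul_apply, NNReal.smul_def, Real.coe_toNNReal _ (hA0 i)]
    rw [this]
    exact continuous_const.mul hP₀c
  · intro j
    have : ⇑((A j).toNNReal • Q₀) = fun y => A j * Q₀ y := by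
      funext y
      simp [Seminorm.smul_apply, NNReal.smul_def, Real.coe_toNNReal _ (hA0 j)]
    rw [this]
    exact continuous_const.mul hQ₀c
  · intro i j x y
    have e1 : ((A i).toNNReal • P₀) x = A i * P₀ x := by
      simp [Seminorm.smul_apply, NNReal.smul_def, Real.coe_toNNReal _ (hA0 i)]
    have e2 : ((A j).toNNReal • Q₀) y = A j * Q₀ y := by
      simp [Seminorm.smul_apply, NNReal.smul_def, Real.coe_toNNReal _ (hA0 j)]
    rw [e1, e2]
    calc p i j (β x y) ≤ P' i j x * Q' i j y := hbound i j x y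
      _ ≤ (C i j * P₀ x) * (D i j * Q₀ y) :=
        mul_le_mul (hC i j x) (hD i j y) (apply_nonneg _ _)
          (mul_nonneg (hCpos i j).le (apply_nonneg _ _))
      _ = (C i j * D i j) * (P₀ x * Q₀ y) := by ring
      _ ≤ (A i * A j) * (P₀ x * Q₀ y) :=
        mul_le_mul_of_nonneg_right (hA i j) (by positivity)
      _ = (A i * P₀ x) * (A j * Q₀ y) := by ring
end

section
/- Let E₁, E₂, F be locally convex spaces and β : E₁ × E₂ → F be a continuous bilinear map. If F has the countable neighbourhood property, then β admits product estimates. -/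
open Filter Topology Set
open scoped NNReal

/-- Single-seminorm product estimate for a continuous bilinear map into an LCS. -/
theorem single_estimate {E₁ E₂ F : Type*}
    [AddCommGroup E₁] [Module ℝ E₁] [TopologicalSpace E₁]
    [IsTopologicalAddGroup E₁] [ContinuousSMul ℝ E₁] [LocallyConvexSpace ℝ E₁]
    [AddCommGroup E₂] [Module ℝ E₂] [TopologicalSpace E₂]
    [IsTopologicalAddGroup E₂] [ContinuousSMul ℝ E₂] [LocallyConvexSpace ℝ E₂]
    [AddCommGroup F] [Module ℝ F] [TopologicalSpace F]
    [IsTopologicalAddGroup F] [ContinuousSMul ℝ F]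
    (β : E₁ →ₗ[ℝ] E₂ →ₗ[ℝ] F)
    (hβ : Continuous (fun xy : E₁ × E₂ => β xy.1 xy.2))
    (q : Seminorm ℝ F) (hq : Continuous q) :
    ∃ (P : Seminorm ℝ E₁) (Q : Seminorm ℝ E₂),
      Continuous P ∧ Continuous Q ∧ ∀ x y, q (β x y) ≤ P x * Q y := by
  -- preimage of the open unit ball of q is a nbhd of (0,0)
  have hball : {z : F | q z < 1} ∈ 𝓝 (0 : F) := by
    have : IsOpen {z : F | q z < 1} := isOpen_lt hq continuous_const
    exact this.mem_nhds (by simp)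
  have h00 : (fun xy : E₁ × E₂ => β xy.1 xy.2) ⁻¹' {z | q z < 1} ∈ 𝓝 ((0 : E₁), (0 : E₂)) := by
    have := hβ.continuousAt (x := ((0 : E₁), (0 : E₂)))
    apply this
    simpa using hball
  rw [nhds_prod_eq, Filter.mem_prod_iff] at h00
  obtain ⟨U', hU', V', hV', hUV⟩ := h00
  obtain ⟨U, ⟨hU0, hUopen, hUbal, hUconv⟩, hUsub⟩ :=
    (nhds_hasBasis_absConvex_open ℝ E₁).mem_iff.mp hU'
  obtain ⟨V, ⟨hV0, hVopen, hVbal, hVconv⟩, hVsub⟩ :=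
    (nhds_hasBasis_absConvex_open ℝ E₂).mem_iff.mp hV'
  have hUnhds : U ∈ 𝓝 (0 : E₁) := hUopen.mem_nhds hU0
  have hVnhds : V ∈ 𝓝 (0 : E₂) := hVopen.mem_nhds hV0
  have hUabs : Absorbent ℝ U := absorbent_nhds_zero hUnhds
  have hVabs : Absorbent ℝ V := absorbent_nhds_zero hVnhds
  set P := gaugeSeminorm hUbal hUconv hUabs with hP
  set Q := gaugeSeminorm hVbal hVconv hVabs with hQ
  have hPcont : Continuous P :=
    Seminorm.continuous (r := 1) (by rw [gaugeSeminorm_ball_one hUopen]; exact hUnhds)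
  have hQcont : Continuous Q :=
    Seminorm.continuous (r := 1) (by rw [gaugeSeminorm_ball_one hVopen]; exact hVnhds)
  refine ⟨P, Q, hPcont, hQcont, fun x y => ?_⟩
  -- key estimate for t > P x, s > Q y
  have key : ∀ t s : ℝ, P x < t → Q y < s → q (β x y) ≤ t * s := by
    intro t s ht hs
    have ht0 : 0 < t := lt_of_le_of_lt (apply_nonneg P x) ht
    have hs0 : 0 < s := lt_of_le_of_lt (apply_nonneg Q y) hs
    have hxU : t⁻¹ • x ∈ U := by
      have h1 : gauge U (t⁻¹ • x) < 1 := by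
        rw [gauge_smul_of_nonneg (by positivity : (0:ℝ) ≤ t⁻¹)]
        calc t⁻¹ • gauge U x = t⁻¹ * gauge U x := rfl
          _ < t⁻¹ * t := mul_lt_mul_of_pos_left ht (by positivity)
          _ = 1 := inv_mul_cancel₀ ht0.ne'
      have h2 := gauge_lt_one_eq_self_of_isOpen hUconv hU0 hUopen
      rw [← h2]; exact h1
    have hyV : s⁻¹ • y ∈ V := by
      have h1 : gauge V (s⁻¹ • y) < 1 := by
        rw [gauge_smul_of_nonneg (by positivity : (0:ℝ) ≤ s⁻¹)]
        calc s⁻¹ • gauge V y = s⁻¹ * gauge V y := rfl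
          _ < s⁻¹ * s := mul_lt_mul_of_pos_left hs (by positivity)
          _ = 1 := inv_mul_cancel₀ hs0.ne'
      have h2 := gauge_lt_one_eq_self_of_isOpen hVconv hV0 hVopen
      rw [← h2]; exact h1
    have hq1 : q (β (t⁻¹ • x) (s⁻¹ • y)) ≤ 1 := by
      have := hUV (Set.mk_mem_prod (hUsub hxU) (hVsub hyV))
      exact le_of_lt this
    have hx' : t • t⁻¹ • x = x := smul_inv_smul₀ ht0.ne' x
    have hy' : s • s⁻¹ • y = y := smul_inv_smul₀ hs0.ne' y
    calc q (β x y) = q (β (t • t⁻¹ • x) (s • s⁻¹ • y)) := by rw [hx', hy']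
      _ = |t| * (|s| * q (β (t⁻¹ • x) (s⁻¹ • y))) := by
          simp only [map_smul, LinearMap.smul_apply, map_smul_eq_mul]
          simp only [Real.norm_eq_abs]; ring
      _ ≤ |t| * (|s| * 1) := by
          apply mul_le_mul_of_nonneg_left _ (abs_nonneg _)
          exact mul_le_mul_of_nonneg_left hq1 (abs_nonneg _)
      _ = t * s := by rw [mul_one, abs_of_pos ht0, abs_of_pos hs0]
  -- take limits
  have hev : ∀ ε > (0:ℝ), q (β x y) ≤ (P x + ε) * (Q y + ε) :=
    fun ε hε => key _ _ (by linarith [apply_nonneg P x]) (by linarith [apply_nonneg Q y])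
  have hten : Tendsto (fun ε : ℝ => (P x + ε) * (Q y + ε)) (𝓝[>] 0) (𝓝 (P x * Q y)) := by
    have : Continuous (fun ε : ℝ => (P x + ε) * (Q y + ε)) := by continuity
    have h := (this.tendsto 0).mono_left (nhdsWithin_le_nhds (s := Set.Ioi (0:ℝ)))
    simpa using h
  exact ge_of_tendsto hten (eventually_nhdsWithin_of_forall (fun ε hε => hev ε hε))

/-- If `F` has the countable neighbourhood property, then every continuous bilinear map
`β : E₁ × E₂ → F` between locally convex spaces admits product estimates. -/
theorem productEstimates_of_cnp_codomain {E₁ E₂ F : Type*}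
    [AddCommGroup E₁] [Module ℝ E₁] [TopologicalSpace E₁]
    [IsTopologicalAddGroup E₁] [ContinuousSMul ℝ E₁] [LocallyConvexSpace ℝ E₁] [T2Space E₁]
    [AddCommGroup E₂] [Module ℝ E₂] [TopologicalSpace E₂]
    [IsTopologicalAddGroup E₂] [ContinuousSMul ℝ E₂] [LocallyConvexSpace ℝ E₂] [T2Space E₂]
    [AddCommGroup F] [Module ℝ F] [TopologicalSpace F]
    [IsTopologicalAddGroup F] [ContinuousSMul ℝ F] [LocallyConvexSpace ℝ F] [T2Space F]
    (β : E₁ →ₗ[ℝ] E₂ →ₗ[ℝ] F)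
    (hβ : Continuous (fun xy : E₁ × E₂ => β xy.1 xy.2))
    (hF : CountableNeighbourhoodProperty F) :
    ProductEstimates (fun x y => β x y) := by
  intro p hp
  obtain ⟨q, hqc, hC⟩ := hF (fun n => p n.unpair.1 n.unpair.2) (fun n => hp _ _)
  choose C hCpos hCle using hC
  obtain ⟨P₀, Q₀, hP₀c, hQ₀c, hPQ⟩ := single_estimate β hβ q hqc
  set M : ℕ → ℝ := fun i =>
    1 + ∑ j ∈ Finset.range (i+1), ∑ k ∈ Finset.range (i+1), C (Nat.pair j k) with hM
  have hsum_nonneg : ∀ i, 0 ≤ ∑ j ∈ Finset.range (i+1), ∑ k ∈ Finset.range (i+1),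
      C (Nat.pair j k) :=
    fun i => Finset.sum_nonneg fun j _ => Finset.sum_nonneg fun k _ => (hCpos _).le
  have hM1 : ∀ i, 1 ≤ M i := fun i => le_add_of_nonneg_right (hsum_nonneg i)
  have hM0 : ∀ i, 0 ≤ M i := fun i => zero_le_one.trans (hM1 i)
  have hMC : ∀ i j, C (Nat.pair i j) ≤ M (max i j) := by
    intro i j
    have hmem₁ : i ∈ Finset.range (max i j + 1) := by
      simp [Nat.lt_succ_iff, le_max_left]
    have hmem₂ : j ∈ Finset.range (max i j + 1) := by
      simp [Nat.lt_succ_iff, le_max_right]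
    have h1 : C (Nat.pair i j) ≤ ∑ k ∈ Finset.range (max i j + 1), C (Nat.pair i k) :=
      Finset.single_le_sum (fun k _ => (hCpos _).le) hmem₂
    have h2 : (∑ k ∈ Finset.range (max i j + 1), C (Nat.pair i k)) ≤
        ∑ j' ∈ Finset.range (max i j + 1), ∑ k ∈ Finset.range (max i j + 1),
          C (Nat.pair j' k) :=
      Finset.single_le_sum
        (fun j' _ => Finset.sum_nonneg fun k _ => (hCpos _).le) hmem₁
    simp only [hM]
    linarith
  have hMmono : Monotone M := by
    intro i i' hii'
    simp only [hM]
    have hsub : Finset.range (i+1) ⊆ Finset.range (i'+1) :=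
      Finset.range_subset_range.mpr (by omega)
    have step1 : ∑ j ∈ Finset.range (i+1), ∑ k ∈ Finset.range (i+1), C (Nat.pair j k) ≤
        ∑ j ∈ Finset.range (i+1), ∑ k ∈ Finset.range (i'+1), C (Nat.pair j k) :=
      Finset.sum_le_sum fun j _ =>
        Finset.sum_le_sum_of_subset_of_nonneg hsub fun k _ _ => (hCpos _).le
    have step2 : ∑ j ∈ Finset.range (i+1), ∑ k ∈ Finset.range (i'+1), C (Nat.pair j k) ≤
        ∑ j ∈ Finset.range (i'+1), ∑ k ∈ Finset.range (i'+1), C (Nat.pair j k) :=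
      Finset.sum_le_sum_of_subset_of_nonneg hsub fun j _ _ =>
        Finset.sum_nonneg fun k _ => (hCpos _).le
    linarith
  have hkey : ∀ i j, C (Nat.pair i j) ≤ M i * M j := by
    intro i j
    calc C (Nat.pair i j) ≤ M (max i j) := hMC i j
      _ ≤ M i * M j := by
          rcases le_total i j with h | h
          · rw [max_eq_right h]
            calc M j = 1 * M j := (one_mul _).symm
              _ ≤ M i * M j := by
                  apply mul_le_mul_of_nonneg_right (hM1 i) (hM0 j)
          · rw [max_eq_left h]
            calc M i = M i * 1 := (mul_one _).symm
              _ ≤ M i * M j := by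
                  apply mul_le_mul_of_nonneg_left (hM1 j) (hM0 i)
  set c : ℕ → ℝ≥0 := fun i => ⟨M i, hM0 i⟩ with hc
  refine ⟨fun i => c i • P₀, fun j => c j • Q₀, ?_, ?_, ?_⟩
  · intro i
    have : ⇑(c i • P₀) = fun x => M i * P₀ x := by
      funext x
      simp [Seminorm.smul_apply, NNReal.smul_def, hc]
      rfl
    rw [this]
    exact continuous_const.mul hP₀c
  · intro j
    have : ⇑(c j • Q₀) = fun y => M j * Q₀ y := by
      funext y
      simp [Seminorm.smul_apply, NNReal.smul_def, hc]
      rfl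
    rw [this]
    exact continuous_const.mul hQ₀c
  · intro i j x y
    have h1 : p i j (β x y) ≤ C (Nat.pair i j) * q (β x y) := by
      have := hCle (Nat.pair i j) (β x y)
      simpa [Nat.unpair_pair] using this
    have h2 : q (β x y) ≤ P₀ x * Q₀ y := hPQ x y
    have h3 : (c i • P₀) x * (c j • Q₀) y = (M i * M j) * (P₀ x * Q₀ y) := by
      simp only [Seminorm.smul_apply, NNReal.smul_def, hc, smul_eq_mul, NNReal.coe_mk]
      change M i * P₀ x * (M j * Q₀ y) = _
      ring
    rw [h3]
    calc p i j (β x y) ≤ C (Nat.pair i j) * q (β x y) := h1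
      _ ≤ C (Nat.pair i j) * (P₀ x * Q₀ y) :=
          mul_le_mul_of_nonneg_left h2 (hCpos _).le
      _ ≤ (M i * M j) * (P₀ x * Q₀ y) :=
          mul_le_mul_of_nonneg_right (hkey i j)
            (mul_nonneg (apply_nonneg _ _) (apply_nonneg _ _))
end

section
/- The pointwise multiplication map β : ℝ^ℕ × ℝ^ℕ → ℝ^ℕ, β((x_i),(y_i)) = (x_i·y_i), on the Fréchet space ℝ^ℕ with the product topology, is continuous and bilinear but does not admit product estimates. -/
open Filter Topology

/-- Pointwise multiplication `ℝ^ℕ × ℝ^ℕ → ℝ^ℕ` (with the product topology on `ℝ^ℕ`)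
is a continuous bilinear map which does not admit product estimates. -/
theorem pointwiseMul_continuous_not_productEstimates :
    Continuous (fun xy : (ℕ → ℝ) × (ℕ → ℝ) => xy.1 * xy.2) ∧
      ¬ ProductEstimates (fun x y : ℕ → ℝ => x * y) := by
  constructor
  · exact continuous_mul
  · intro h
    set p : ℕ → ℕ → Seminorm ℝ (ℕ → ℝ) :=
      fun _ j => (normSeminorm ℝ ℝ).comp (LinearMap.proj j) with hp
    obtain ⟨P, Q, hP, hQ, hest⟩ := h p (fun i j => show Continuous (fun x : ℕ → ℝ => ‖x j‖) from (continuous_apply j).norm)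
    have h0 : (P 0) ⁻¹' Set.Iio 1 ∈ 𝓝 (0 : ℕ → ℝ) := by
      refine (hP 0).continuousAt.preimage_mem_nhds ?_
      rw [map_zero]
      exact Iio_mem_nhds one_pos
    rw [nhds_pi, Filter.mem_pi] at h0
    obtain ⟨I, hIfin, V, hV, hVsub⟩ := h0
    obtain ⟨j, hj⟩ := hIfin.infinite_compl.nonempty
    have key : P 0 (Pi.single j 1) = 0 := by
      by_contra hne
      have hpos : 0 < P 0 (Pi.single j 1) :=
        lt_of_le_of_ne (apply_nonneg _ _) (Ne.symm hne)
      set c := P 0 (Pi.single j 1) with hc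
      have hlt : ∀ t : ℝ, 0 < t → t * c < 1 := by
        intro t ht
        have hmem : (t • (Pi.single j (1:ℝ) : ℕ → ℝ)) ∈ I.pi V := by
          intro k hk
          have hkj : k ≠ j := fun e => hj (e ▸ hk)
          have hz : (t • (Pi.single j (1:ℝ) : ℕ → ℝ)) k = 0 := by
            simp [Pi.single_eq_of_ne hkj]
          rw [hz]
          exact mem_of_mem_nhds (hV k)
        have := hVsub hmem
        simpa [map_smul_eq_mul, abs_of_pos ht, hc] using this
      have h2 := hlt (2 / c) (by positivity)
      rw [div_mul_cancel₀ _ (ne_of_gt hpos)] at h2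
      linarith
    have hfin := hest 0 j (Pi.single j 1) (Pi.single j 1)
    have h1 : p 0 j ((Pi.single j 1 : ℕ → ℝ) * Pi.single j 1) = 1 := by
      simp [hp, Seminorm.comp_apply]
    rw [h1, key, zero_mul] at hfin
    linarith
end

section
/- The pointwise multiplication map β : C^∞[0,1] × C^∞[0,1] → C^∞[0,1] is continuous and bilinear but does not admit product estimates. -/
/-- The space `C^∞[0,1]`, modelled as the space of smooth real functions, carrying the
topology defined by the seminorms `γ ↦ max_{0 ≤ j ≤ k} sup_{x ∈ [0,1]} |γ⁽ʲ⁾(x)|`. -/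
def SmoothFn : Submodule ℝ (ℝ → ℝ) where
  carrier := {f | ContDiff ℝ (⊤ : ℕ∞) f}
  add_mem' {a b} hf hg :=
    ContDiff.add (show ContDiff ℝ (⊤ : ℕ∞) a from hf) (show ContDiff ℝ (⊤ : ℕ∞) b from hg)
  zero_mem' := show ContDiff ℝ (⊤ : ℕ∞) _ from contDiff_const
  smul_mem' c f hf := ContDiff.const_smul c (show ContDiff ℝ (⊤ : ℕ∞) f from hf)

/-- The `k`-th derivative of a smooth function, restricted to `[0,1]`, as a continuous
map; these maps induce the `C^k`-seminorm topologies. -/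
theorem SmoothFn.contDiff (f : SmoothFn) : ContDiff ℝ (⊤ : ℕ∞) f.1 := f.2

noncomputable def derivRestrict (k : ℕ) (f : SmoothFn) : C(Set.Icc (0 : ℝ) 1, ℝ) :=
  ⟨fun x => iteratedDeriv k f.1 x,
    ((SmoothFn.contDiff f).continuous_iteratedDeriv k (by exact_mod_cast le_top)).comp continuous_subtype_val⟩

/-- The topology of `C^∞[0,1]`: the initial topology with respect to the maps sending a
smooth function to its `k`-th derivative, viewed in `C([0,1],ℝ)` with the uniform
topology; equivalently, the topology defined by the seminorms `‖·‖_{C^k}`. -/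
noncomputable instance smoothFnTopology : TopologicalSpace SmoothFn :=
  ⨅ k : ℕ, TopologicalSpace.induced (derivRestrict k) inferInstance

lemma SmoothFn.contDiffNat (f : SmoothFn) (k : ℕ) : ContDiff ℝ (k : ℕ) f.1 :=
  (SmoothFn.contDiff f).of_le (by exact_mod_cast le_top)

noncomputable def dR (k : ℕ) : SmoothFn →ₗ[ℝ] C(Set.Icc (0 : ℝ) 1, ℝ) where
  toFun := derivRestrict k
  map_add' f g := by
    ext x
    show iteratedDeriv k ((f + g) : SmoothFn).1 x = iteratedDeriv k f.1 x + iteratedDeriv k g.1 x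
    have : ((f + g) : SmoothFn).1 = f.1 + g.1 := rfl
    rw [this, iteratedDeriv_eq_iteratedFDeriv, iteratedDeriv_eq_iteratedFDeriv,
      iteratedDeriv_eq_iteratedFDeriv,
      iteratedFDeriv_add_apply (SmoothFn.contDiffNat f k).contDiffAt (SmoothFn.contDiffNat g k).contDiffAt]
    rfl
  map_smul' c f := by
    ext x
    show iteratedDeriv k ((c • f) : SmoothFn).1 x = c • iteratedDeriv k f.1 x
    have : ((c • f) : SmoothFn).1 = c • f.1 := rfl
    rw [this, iteratedDeriv_eq_iteratedFDeriv, iteratedDeriv_eq_iteratedFDeriv,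
      iteratedFDeriv_const_smul_apply (SmoothFn.contDiffNat f k).contDiffAt]
    rfl

noncomputable def PP : SeminormFamily ℝ SmoothFn ((_ : ℕ) × Fin 1) :=
  SeminormFamily.sigma (fun k => fun _ : Fin 1 =>
    (normSeminorm ℝ C(Set.Icc (0 : ℝ) 1, ℝ)).comp (dR k))

lemma withSeminorms_PP : WithSeminorms PP := by
  have h : ∀ k : ℕ, WithSeminorms
      (topology := TopologicalSpace.induced (derivRestrict k) inferInstance)
      (fun _ : Fin 1 => (normSeminorm ℝ C(Set.Icc (0 : ℝ) 1, ℝ)).comp (dR k)) := fun k =>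
    (dR k).withSeminorms_induced (norm_withSeminorms ℝ _)
  exact withSeminorms_iInf h

lemma continuous_dR (k : ℕ) : Continuous (dR k) :=
  continuous_iInf_dom (continuous_induced_dom (t := (inferInstance :
    TopologicalSpace C(Set.Icc (0 : ℝ) 1, ℝ))))

lemma dominated (q : Seminorm ℝ SmoothFn) (hq : Continuous q) :
    ∃ (K : ℕ) (C : ℝ), 0 < C ∧
      ∀ f : SmoothFn, q f ≤ C * ∑ k ∈ Finset.range (K + 1), ‖dR k f‖ := by
  obtain ⟨s, C, hC0, hqle⟩ := Seminorm.bound_of_continuous withSeminorms_PP q hq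
  refine ⟨s.sup (fun i => i.1), (C : ℝ) + 1, by positivity, fun f => ?_⟩
  have h1 : q f ≤ (C : ℝ) * (s.sup PP) f := hqle f
  have h2 : (s.sup PP) f ≤ ∑ k ∈ Finset.range (s.sup (fun i => i.1) + 1), ‖dR k f‖ := by
    apply Seminorm.finset_sup_apply_le (Finset.sum_nonneg fun _ _ => norm_nonneg _)
    intro i hi
    have : PP i f = ‖dR i.1 f‖ := rfl
    rw [this]
    exact Finset.single_le_sum (f := fun k => ‖dR k f‖) (fun _ _ => norm_nonneg _)
      (Finset.mem_range.mpr (Nat.lt_succ_of_le (Finset.le_sup (f := fun i => i.1) hi)))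
  have h3 : (0:ℝ) ≤ ∑ k ∈ Finset.range (s.sup (fun i => i.1) + 1), ‖dR k f‖ :=
    Finset.sum_nonneg fun _ _ => norm_nonneg _
  nlinarith [h1, h2, h3, apply_nonneg (s.sup PP) f, C.coe_nonneg]

noncomputable def expFn (a : ℝ) : SmoothFn :=
  ⟨fun x => Real.exp (a * x),
    show ContDiff ℝ (⊤ : ℕ∞) (fun x => Real.exp (a * x)) from
      Real.contDiff_exp.comp ((contDiff_const).mul contDiff_id)⟩

lemma itd_exp (a : ℝ) : ∀ k : ℕ,
    iteratedDeriv k (fun x => Real.exp (a * x)) = fun x => a ^ k * Real.exp (a * x) := by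
  intro k
  induction k with
  | zero => simp
  | succ n ih =>
    rw [iteratedDeriv_succ, ih]
    funext x
    have h1 : HasDerivAt (fun y : ℝ => a * y) a x := by
      simpa using (hasDerivAt_id x).const_mul a
    have h2 : HasDerivAt (fun y : ℝ => Real.exp (a * y)) (Real.exp (a * x) * a) x := h1.exp
    have h3 : HasDerivAt (fun y : ℝ => a ^ n * Real.exp (a * y))
        (a ^ n * (Real.exp (a * x) * a)) x := h2.const_mul _
    rw [h3.deriv]
    ring

lemma norm_dR_expFn_le {a : ℝ} (ha : 1 ≤ a) (k : ℕ) :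
    ‖dR k (expFn a)‖ ≤ a ^ k * Real.exp a := by
  have ha0 : (0:ℝ) ≤ a := le_trans zero_le_one ha
  apply (ContinuousMap.norm_le _ (by positivity)).mpr
  intro x
  show ‖iteratedDeriv k (expFn a).1 x.1‖ ≤ a ^ k * Real.exp a
  have : (expFn a).1 = fun x => Real.exp (a * x) := rfl
  rw [this, itd_exp]
  rw [Real.norm_eq_abs, abs_of_nonneg (by positivity)]
  have hx1 : a * x.1 ≤ a := by
    have := x.2.2
    nlinarith
  exact mul_le_mul_of_nonneg_left (Real.exp_le_exp.mpr hx1) (by positivity)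

noncomputable def mulS (f g : SmoothFn) : SmoothFn :=
  ⟨f.1 * g.1, (SmoothFn.contDiff f).mul (SmoothFn.contDiff g)⟩

noncomputable def Sig (k : ℕ) (f : SmoothFn) : ℝ := ∑ j ∈ Finset.range (k + 1), ‖dR j f‖

lemma Sig_nonneg (k : ℕ) (f : SmoothFn) : 0 ≤ Sig k f :=
  Finset.sum_nonneg fun _ _ => norm_nonneg _

lemma norm_iFD_le_Sig (k i : ℕ) (hik : i ∈ Finset.range (k + 1)) (f : SmoothFn) (x : Set.Icc (0:ℝ) 1) :
    ‖iteratedFDeriv ℝ i f.1 x.1‖ ≤ Sig k f := by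
  rw [norm_iteratedFDeriv_eq_norm_iteratedDeriv]
  have h1 : ‖iteratedDeriv i f.1 x.1‖ = ‖(dR i f) x‖ := rfl
  rw [h1]
  exact le_trans (ContinuousMap.norm_coe_le_norm _ x)
    (Finset.single_le_sum (f := fun j => ‖dR j f‖) (fun _ _ => norm_nonneg _) hik)

lemma mulBound (k : ℕ) (f g : SmoothFn) :
    ‖dR k (mulS f g)‖ ≤ 2 ^ k * Sig k f * Sig k g := by
  have hSf := Sig_nonneg k f
  have hSg := Sig_nonneg k g
  apply (ContinuousMap.norm_le _ (by positivity)).mpr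
  intro x
  show ‖iteratedDeriv k (mulS f g).1 x.1‖ ≤ 2 ^ k * Sig k f * Sig k g
  rw [← norm_iteratedFDeriv_eq_norm_iteratedDeriv]
  have hmul : (mulS f g).1 = fun y => f.1 y * g.1 y := rfl
  rw [hmul]
  refine le_trans (norm_iteratedFDeriv_mul_le (SmoothFn.contDiff f) (SmoothFn.contDiff g)
    x.1 (by exact_mod_cast le_top)) ?_
  have hstep : ∀ i ∈ Finset.range (k + 1),
      (k.choose i : ℝ) * ‖iteratedFDeriv ℝ i f.1 x.1‖ * ‖iteratedFDeriv ℝ (k - i) g.1 x.1‖ ≤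
        (k.choose i : ℝ) * (Sig k f * Sig k g) := by
    intro i hi
    have h1 := norm_iFD_le_Sig k i hi f x
    have h2 := norm_iFD_le_Sig k (k - i) (Finset.mem_range.mpr (Nat.lt_succ_of_le (Nat.sub_le k i))) g x
    have hc : (0:ℝ) ≤ (k.choose i : ℝ) := Nat.cast_nonneg _
    rw [mul_assoc]
    refine mul_le_mul_of_nonneg_left ?_ hc
    exact mul_le_mul h1 h2 (norm_nonneg _) hSf
  refine le_trans (Finset.sum_le_sum hstep) ?_
  rw [← Finset.sum_mul, mul_assoc]
  apply mul_le_mul_of_nonneg_right _ (by positivity)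
  rw [← Nat.cast_sum]
  rw [Nat.sum_range_choose]
  push_cast
  exact le_refl _

lemma continuous_Sig (k : ℕ) : Continuous (Sig k) :=
  continuous_finset_sum _ fun j _ => (continuous_dR j).norm

lemma Sig_zero (k : ℕ) : Sig k 0 = 0 := by
  simp [Sig, map_zero]

lemma mulS_sub_identity (a b c d : SmoothFn) :
    mulS a b - mulS c d = mulS (a - c) b + mulS c (b - d) := by
  apply Subtype.ext
  show (mulS a b).1 - (mulS c d).1 = (mulS (a - c) b).1 + (mulS c (b - d)).1
  have h1 : (mulS (a - c) b).1 = (a.1 - c.1) * b.1 := rfl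
  have h2 : (mulS c (b - d)).1 = c.1 * (b.1 - d.1) := rfl
  rw [h1, h2]
  show a.1 * b.1 - c.1 * d.1 = _
  ring

lemma continuous_mulS : Continuous (fun fg : SmoothFn × SmoothFn => mulS fg.1 fg.2) := by
  have htag : IsTopologicalAddGroup SmoothFn := withSeminorms_PP.topologicalAddGroup
  apply continuous_iInf_rng.mpr
  intro k
  apply continuous_induced_rng.mpr
  show Continuous (fun p : SmoothFn × SmoothFn => dR k (mulS p.1 p.2))
  rw [continuous_iff_continuousAt]
  intro p₀
  apply tendsto_iff_dist_tendsto_zero.mpr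
  apply squeeze_zero (g := fun p : SmoothFn × SmoothFn =>
    2 ^ k * Sig k (p.1 - p₀.1) * Sig k p.2 + 2 ^ k * Sig k p₀.1 * Sig k (p.2 - p₀.2))
  · intro _; exact dist_nonneg
  · intro p
    have key : dR k (mulS p.1 p.2) - dR k (mulS p₀.1 p₀.2) =
        dR k (mulS (p.1 - p₀.1) p.2) + dR k (mulS p₀.1 (p.2 - p₀.2)) := by
      rw [← map_sub, ← map_add, mulS_sub_identity]
    rw [dist_eq_norm, key]
    exact le_trans (norm_add_le _ _) (add_le_add (mulBound k _ _) (mulBound k _ _))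
  · have hcont : Continuous (fun p : SmoothFn × SmoothFn =>
        2 ^ k * Sig k (p.1 - p₀.1) * Sig k p.2 + 2 ^ k * Sig k p₀.1 * Sig k (p.2 - p₀.2)) := by
      apply Continuous.add
      · exact (continuous_const.mul ((continuous_Sig k).comp
          (continuous_fst.sub continuous_const))).mul ((continuous_Sig k).comp continuous_snd)
      · exact continuous_const.mul ((continuous_Sig k).comp
          (continuous_snd.sub continuous_const))
    have h0 : (fun p : SmoothFn × SmoothFn =>
        2 ^ k * Sig k (p.1 - p₀.1) * Sig k p.2 + 2 ^ k * Sig k p₀.1 * Sig k (p.2 - p₀.2)) p₀ = 0 := by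
      simp [Sig_zero]
    rw [← h0]
    exact hcont.tendsto p₀

lemma mulS_expFn (a : ℝ) : mulS (expFn a) (expFn 1) = expFn (a + 1) := by
  apply Subtype.ext
  show (expFn a).1 * (expFn 1).1 = (expFn (a+1)).1
  funext x
  show Real.exp (a * x) * Real.exp (1 * x) = Real.exp ((a + 1) * x)
  rw [← Real.exp_add]
  ring_nf

/-- Pointwise multiplication on `C^∞[0,1]` is a continuous bilinear map which does not
admit product estimates. -/
theorem smoothFn_mul_continuous_not_productEstimates :
    Continuous (fun fg : SmoothFn × SmoothFn =>
      (⟨fg.1.1 * fg.2.1, (SmoothFn.contDiff fg.1).mul (SmoothFn.contDiff fg.2)⟩ : SmoothFn)) ∧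
      ¬ ProductEstimates (fun f g : SmoothFn =>
        (⟨f.1 * g.1, (SmoothFn.contDiff f).mul (SmoothFn.contDiff g)⟩ : SmoothFn)) := by
  constructor
  · exact continuous_mulS
  · intro hPE
    obtain ⟨P, Q, hP, hQ, hPQ⟩ := hPE
      (fun _ j => (normSeminorm ℝ C(Set.Icc (0:ℝ) 1, ℝ)).comp (dR j))
      (fun i j => show Continuous fun f => ‖dR j f‖ from (continuous_dR j).norm)
    obtain ⟨K, C, hC, hdom⟩ := dominated (P 0) (hP 0)
    set D := Q (K + 1) (expFn 1) with hD
    have hD0 : 0 ≤ D := apply_nonneg _ _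
    set a : ℝ := max 1 (C * (K + 1) * D) + 1 with ha_def
    have ha1 : 1 ≤ a := by have := le_max_left 1 (C * (K + 1) * D); simp only [ha_def]; linarith
    have haD : C * (K + 1) * D < a := by
      have := le_max_right 1 (C * (K + 1) * D); simp only [ha_def]; linarith
    have ha0 : (0:ℝ) < a := by linarith
    -- lower bound on the C^{K+1}-seminorm of exp((a+1)x)
    have hlow : (a + 1) ^ (K + 1) * Real.exp (a + 1) ≤ ‖dR (K + 1) (expFn (a + 1))‖ := by
      have h := ContinuousMap.norm_coe_le_norm (dR (K + 1) (expFn (a + 1)))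
        ⟨1, by constructor <;> norm_num⟩
      have hv : ((dR (K + 1) (expFn (a + 1))) ⟨1, by constructor <;> norm_num⟩ : ℝ) =
          (a + 1) ^ (K + 1) * Real.exp (a + 1) := by
        show iteratedDeriv (K + 1) (expFn (a + 1)).1 1 = _
        have hval : (expFn (a + 1)).1 = fun x => Real.exp ((a + 1) * x) := rfl
        rw [hval, itd_exp]
        simp
      rw [hv, Real.norm_eq_abs, abs_of_nonneg (by positivity)] at h
      exact h
    -- upper bound on P 0 (expFn a)
    have hup : P 0 (expFn a) ≤ C * ((K + 1) * (a ^ K * Real.exp a)) := by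
      refine le_trans (hdom _) (mul_le_mul_of_nonneg_left ?_ hC.le)
      calc ∑ k ∈ Finset.range (K + 1), ‖dR k (expFn a)‖
          ≤ ∑ k ∈ Finset.range (K + 1), a ^ K * Real.exp a := by
            apply Finset.sum_le_sum
            intro k hk
            refine le_trans (norm_dR_expFn_le ha1 k) (mul_le_mul_of_nonneg_right ?_
              (Real.exp_pos a).le)
            exact pow_le_pow_right₀ ha1 (Nat.lt_succ_iff.mp (Finset.mem_range.mp hk))
        _ = (K + 1 : ℝ) * (a ^ K * Real.exp a) := by
            rw [Finset.sum_const, Finset.card_range, nsmul_eq_mul]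
            push_cast
            ring
    -- the product estimate applied to our functions
    have hmain : ((normSeminorm ℝ C(Set.Icc (0:ℝ) 1, ℝ)).comp (dR (K + 1)))
        (mulS (expFn a) (expFn 1)) ≤ P 0 (expFn a) * Q (K + 1) (expFn 1) :=
      hPQ 0 (K + 1) (expFn a) (expFn 1)
    rw [mulS_expFn] at hmain
    have hmain2 : ‖dR (K + 1) (expFn (a + 1))‖ ≤ P 0 (expFn a) * D := hmain
    -- combine everything
    have hstep1 : a ^ (K + 1) * Real.exp a ≤ (a + 1) ^ (K + 1) * Real.exp (a + 1) := by
      refine mul_le_mul (pow_le_pow_left₀ (by linarith) (by linarith) _)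
        (Real.exp_le_exp.mpr (by linarith)) (Real.exp_pos a).le (by positivity)
    have hstep2 : P 0 (expFn a) * D ≤ C * ((K + 1) * (a ^ K * Real.exp a)) * D :=
      mul_le_mul_of_nonneg_right hup hD0
    have hfinal : a * (a ^ K * Real.exp a) ≤ (C * (K + 1) * D) * (a ^ K * Real.exp a) := by
      have h1 : a ^ (K + 1) * Real.exp a ≤ C * ((K + 1) * (a ^ K * Real.exp a)) * D :=
        hstep1.trans (hlow.trans (hmain2.trans hstep2))
      calc a * (a ^ K * Real.exp a) = a ^ (K + 1) * Real.exp a := by rw [pow_succ]; ring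
        _ ≤ C * ((K + 1) * (a ^ K * Real.exp a)) * D := h1
        _ = (C * (K + 1) * D) * (a ^ K * Real.exp a) := by ring
    have hpos : (0:ℝ) < a ^ K * Real.exp a := by positivity
    have := le_of_mul_le_mul_right hfinal hpos
    linarith
end

section
/- Let M be a paracompact, locally compact, non-compact Hausdorff topological space and let (V_j)_{j∈J} be a locally finite cover of M by relatively compact, open, non-empty subsets. Then the compact covering number θ(M) (the smallest cardinality of a cover of M by compact sets) equals |J|. -/
universe u

/-- The *compact covering number* `θ(M)` of a topological space: the smallest
cardinality of a cover of `M` by compact subsets. -/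
noncomputable def compactCoveringNumber (M : Type u) [TopologicalSpace M] : Cardinal.{u} :=
  sInf {c : Cardinal.{u} | ∃ S : Set (Set M),
    (∀ K ∈ S, IsCompact K) ∧ ⋃₀ S = Set.univ ∧ Cardinal.mk S = c}

/-- If `M` is a paracompact, locally compact, non-compact Hausdorff space and
`(V j)_{j ∈ J}` is a locally finite cover of `M` by relatively compact, open, non-empty
sets, then the compact covering number of `M` equals `#J`. -/
theorem compactCoveringNumber_eq_of_locallyFinite_cover {M : Type u} [TopologicalSpace M]
    [T2Space M] [ParacompactSpace M] [LocallyCompactSpace M] (hM : ¬ CompactSpace M)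
    {J : Type u} (V : J → Set M) (hlf : LocallyFinite V)
    (hopen : ∀ j, IsOpen (V j)) (hne : ∀ j, (V j).Nonempty)
    (hrc : ∀ j, IsCompact (closure (V j)))
    (hcov : ⋃ j, V j = Set.univ) :
    compactCoveringNumber M = Cardinal.mk J := by
  have hmem : Cardinal.mk (Set.range fun j => closure (V j)) ∈
      {c : Cardinal.{u} | ∃ S : Set (Set M),
        (∀ K ∈ S, IsCompact K) ∧ ⋃₀ S = Set.univ ∧ Cardinal.mk S = c} := by
    refine ⟨_, ?_, ?_, rfl⟩
    · rintro K ⟨j, rfl⟩; exact hrc j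
    · rw [Set.sUnion_range]
      apply Set.eq_univ_of_univ_subset
      rw [← hcov]
      exact Set.iUnion_mono fun j => subset_closure
  apply le_antisymm
  · exact (csInf_le' hmem).trans Cardinal.mk_range_le
  · apply le_csInf ⟨_, hmem⟩
    rintro c ⟨S, hScomp, hScov, rfl⟩
    have hSinf : Infinite S := by
      rw [Set.infinite_coe_iff]
      intro hfin
      exact hM (isCompact_univ_iff.mp (hScov ▸ hfin.isCompact_sUnion hScomp))
    have hchoice : ∀ j, ∃ K : S, ((K : Set M) ∩ V j).Nonempty := by
      intro j
      obtain ⟨x, hx⟩ := hne j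
      have hx' : x ∈ ⋃₀ S := hScov ▸ Set.mem_univ x
      obtain ⟨K, hKS, hxK⟩ := hx'
      exact ⟨⟨K, hKS⟩, x, hxK, hx⟩
    choose f hf using hchoice
    have hfiber : ∀ K : S, Finite {j // f j = K} := by
      intro K
      have hfin : {j | (V j ∩ (K : Set M)).Nonempty}.Finite :=
        hlf.finite_nonempty_inter_compact (hScomp K K.2)
      have : Finite {j | (V j ∩ (K : Set M)).Nonempty} := hfin.to_subtype
      refine Finite.of_injective
        (fun p => (⟨p.1, by
          obtain ⟨x, hxK, hxV⟩ := hf p.1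
          exact ⟨x, hxV, p.2 ▸ hxK⟩⟩ : {j | (V j ∩ (K : Set M)).Nonempty}))
        ?_
      intro a b hab
      exact Subtype.ext (by simpa [Subtype.ext_iff] using hab)
    calc Cardinal.mk J = Cardinal.mk (Σ K : S, {j // f j = K}) :=
          (Cardinal.mk_congr (Equiv.sigmaFiberEquiv f)).symm
      _ = Cardinal.sum (fun K : S => Cardinal.mk {j // f j = K}) := Cardinal.mk_sigma _
      _ ≤ Cardinal.sum (fun _ : S => Cardinal.aleph0) := by
          apply Cardinal.sum_le_sum
          intro K
          have := hfiber K
          exact Cardinal.mk_le_aleph0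
      _ = Cardinal.mk S * Cardinal.aleph0 := by simp [Cardinal.sum_const]
      _ = Cardinal.mk S := Cardinal.mul_aleph0_eq (Cardinal.aleph0_le_mk S)
end

section
/- Let M be a paracompact, locally compact, non-compact Hausdorff space written as a topological disjoint union of open, σ-compact, non-empty subsets U_j (j ∈ J). Then the compact covering number θ(M) equals max{|J|, ℵ₀}. -/
universe u

/-- If a paracompact, locally compact, non-compact Hausdorff space `M` is the topological
disjoint union of open, σ-compact, non-empty subsets `U j` (`j ∈ J`), then the compact
covering number of `M` equals `max {#J, ℵ₀}`. -/
theorem compactCoveringNumber_eq_of_sigmaCompact_partition {M : Type u} [TopologicalSpace M]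
    [T2Space M] [ParacompactSpace M] [LocallyCompactSpace M] (hM : ¬ CompactSpace M)
    {J : Type u} (U : J → Set M)
    (hopen : ∀ j, IsOpen (U j)) (hne : ∀ j, (U j).Nonempty)
    (hsc : ∀ j, IsSigmaCompact (U j))
    (hdisj : Pairwise (Function.onFun Disjoint U))
    (hcov : ⋃ j, U j = Set.univ) :
    compactCoveringNumber M = max (Cardinal.mk J) Cardinal.aleph0 := by
  classical
  choose K hKc hKu using hsc
  set S₀ : Set (Set M) := Set.range (fun p : J × ℕ => K p.1 p.2) with hS₀
  have hS₀comp : ∀ T ∈ S₀, IsCompact T := by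
    rintro T ⟨⟨j, n⟩, rfl⟩; exact hKc j n
  have hS₀cov : ⋃₀ S₀ = Set.univ := by
    rw [Set.sUnion_range]
    apply Set.eq_univ_of_univ_subset
    rw [← hcov]
    refine Set.iUnion_subset fun j => ?_
    rw [← hKu j]
    exact Set.iUnion_subset fun n => Set.subset_iUnion_of_subset (j, n) le_rfl
  have hmem : Cardinal.mk S₀ ∈ {c : Cardinal.{u} | ∃ S : Set (Set M),
      (∀ T ∈ S, IsCompact T) ∧ ⋃₀ S = Set.univ ∧ Cardinal.mk S = c} :=
    ⟨S₀, hS₀comp, hS₀cov, rfl⟩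
  apply le_antisymm
  · refine (csInf_le' hmem).trans ?_
    have h1 : Cardinal.mk S₀ ≤ Cardinal.mk (J × ℕ) := Cardinal.mk_range_le
    have h2 : Cardinal.mk (J × ℕ) = Cardinal.mk J * Cardinal.aleph0 := by
      simp [Cardinal.mk_prod]
    rw [h2] at h1
    refine h1.trans ?_
    rcases le_total (Cardinal.mk J) Cardinal.aleph0 with h | h
    · calc Cardinal.mk J * Cardinal.aleph0 ≤ Cardinal.aleph0 * Cardinal.aleph0 := by
            exact mul_le_mul' h le_rfl
        _ = Cardinal.aleph0 := Cardinal.aleph0_mul_aleph0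
        _ ≤ _ := le_max_right _ _
    · rw [Cardinal.mul_aleph0_eq h]; exact le_max_left _ _
  · refine le_csInf ⟨_, hmem⟩ ?_
    rintro c ⟨S, hScomp, hScov, rfl⟩
    have haleph : Cardinal.aleph0 ≤ Cardinal.mk S := by
      by_contra h
      push_neg at h
      have hfin : S.Finite := by
        rw [← Set.not_infinite]
        intro hinf
        exact h.not_ge (Cardinal.infinite_iff.mp hinf.to_subtype)
      have : IsCompact (⋃₀ S) := hfin.isCompact_sUnion hScomp
      rw [hScov] at this
      exact hM (isCompact_univ_iff.mp this)
    have hJ : Cardinal.mk J ≤ Cardinal.mk S := by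
      -- pick a point in each U j and a member of S containing it
      have hx : ∀ j, ∃ T ∈ S, (hne j).choose ∈ T := by
        intro j
        have : (hne j).choose ∈ ⋃₀ S := by rw [hScov]; trivial
        exact this
      choose T hTS hxT using hx
      -- fibers
      set A : S → Set J := fun s => {j | T j = s.1} with hA
      have hAfin : ∀ s : S, (A s).Finite := by
        rintro ⟨s, hs⟩
        have hsc' : IsCompact s := hScomp s hs
        have hcov' : s ⊆ ⋃ j, U j := by rw [hcov]; exact Set.subset_univ _
        obtain ⟨t, ht⟩ := hsc'.elim_finite_subcover U hopen hcov'
        refine Set.Finite.subset t.finite_toSet fun j hj => ?_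
        have hxj : (hne j).choose ∈ s := by
          have := hxT j; rw [hj] at this; exact this
        obtain ⟨i, hit, hxi⟩ := Set.mem_iUnion₂.mp (ht hxj)
        have : j = i := by
          by_contra hne'
          exact (hdisj hne').ne_of_mem (hne j).choose_spec hxi rfl
        rwa [this]
      have hUnion : ⋃ s : S, A s = Set.univ := by
        apply Set.eq_univ_of_forall
        intro j
        exact Set.mem_iUnion.mpr ⟨⟨T j, hTS j⟩, rfl⟩
      have h1 : Cardinal.mk J ≤ Cardinal.mk S * ⨆ s : S, Cardinal.mk (A s) := by
        have := Cardinal.mk_iUnion_le A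
        rwa [hUnion, Cardinal.mk_univ] at this
      have h2 : (⨆ s : S, Cardinal.mk (A s)) ≤ Cardinal.aleph0 := by
        refine ciSup_le' fun s => ?_
        have := (hAfin s).countable
        exact Cardinal.mk_le_aleph0_iff.mpr this.to_subtype
      calc Cardinal.mk J ≤ Cardinal.mk S * Cardinal.aleph0 :=
            h1.trans (mul_le_mul' le_rfl h2)
        _ = Cardinal.mk S := Cardinal.mul_aleph0_eq haleph
    exact max_le hJ haleph
end

section
/- Let (E_i)_{i∈ℕ} and (F_j)_{j∈ℕ} be sequences of locally convex spaces, H a locally convex space, and β_{i,j} : E_i × F_j → H continuous bilinear maps. Assume that for every double sequence (P_{σ,τ})_{σ,τ∈ℕ} of continuous seminorms on H there exist continuous seminorms P_{i,σ} on E_i, Q_{j,τ} on F_j, and constants C_{i,j,σ,τ} > 0 such that P_{σ,τ}(β_{i,j}(x,y)) ≤ C_{i,j,σ,τ} P_{i,σ}(x) Q_{j,τ}(y) for all i,j,σ,τ and x ∈ E_i, y ∈ F_j. Then the bilinear map β : (⊕_{i∈ℕ} E_i) × (⊕_{j∈ℕ} F_j) → H sending ((x_i),(y_j)) to Σ_{i,j}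 β_{i,j}(x_i,y_j) admits product estimates. -/
universe u v w

-- Bisgaard-type scaling lemma
lemma exists_scaling (D : ℕ → ℕ → ℝ) :
    ∃ c : ℕ → ℝ, (∀ n, 1 ≤ c n) ∧ ∀ n m, D n m ≤ c n * c m := by
  set S : ℕ → ℝ := fun n => ∑ k ∈ Finset.range (n+1), ∑ l ∈ Finset.range (n+1), max 0 (D k l) with hS
  have hSnn : ∀ n, 0 ≤ S n := fun n =>
    Finset.sum_nonneg fun k _ => Finset.sum_nonneg fun l _ => le_max_left _ _
  refine ⟨fun n => 1 + S n, fun n => by dsimp only; linarith [hSnn n], fun n m => ?_⟩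
  have key : D n m ≤ S (max n m) := by
    have h1 : max 0 (D n m) ≤ ∑ l ∈ Finset.range (max n m + 1), max 0 (D n l) :=
      Finset.single_le_sum (f := fun l => max 0 (D n l)) (fun l _ => le_max_left _ _)
        (Finset.mem_range.mpr (Nat.lt_succ_of_le (le_max_right n m)))
    have h2 : (∑ l ∈ Finset.range (max n m + 1), max 0 (D n l)) ≤ S (max n m) :=
      Finset.single_le_sum (f := fun k => ∑ l ∈ Finset.range (max n m + 1), max 0 (D k l))
        (fun k _ => Finset.sum_nonneg fun l _ => le_max_left _ _)
        (Finset.mem_range.mpr (Nat.lt_succ_of_le (le_max_left n m)))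
    exact le_trans (le_max_right _ _) (h1.trans h2)
  have hmax : S (max n m) ≤ S n + S m := by
    rcases max_cases n m with ⟨h, _⟩ | ⟨h, _⟩ <;> rw [h] <;> nlinarith [hSnn n, hSnn m]
  dsimp only
  nlinarith [hSnn n, hSnn m]

section SumSeminorm
variable {ι : Type*} [DecidableEq ι] {E : ι → Type*} [∀ i, AddCommGroup (E i)]
  [∀ i, Module ℝ (E i)] [∀ i (x : E i), Decidable (x ≠ 0)]

lemma dsum_seminorm_eq (q : ∀ i, Seminorm ℝ (E i)) (x : Π₀ i, E i) {s : Finset ι}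
    (h : x.support ⊆ s) : (x.sum fun i xi => q i xi) = ∑ i ∈ s, q i (x i) := by
  rw [DFinsupp.sum]
  exact Finset.sum_subset h (fun i _ hi => by
    rw [DFinsupp.notMem_support_iff.mp hi, map_zero])

noncomputable def sumSeminorm (q : ∀ i, Seminorm ℝ (E i)) : Seminorm ℝ (Π₀ i, E i) where
  toFun x := x.sum fun i xi => q i xi
  map_zero' := by simp [DFinsupp.sum]
  add_le' x y := by
    show ((x + y).sum fun i xi => q i xi) ≤ (x.sum fun i xi => q i xi) + (y.sum fun i xi => q i xi)
    have hx : x.support ⊆ x.support ∪ y.support := Finset.subset_union_left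
    have hy : y.support ⊆ x.support ∪ y.support := Finset.subset_union_right
    rw [dsum_seminorm_eq q (x + y) (DFinsupp.support_add.trans subset_rfl),
        dsum_seminorm_eq q x hx, dsum_seminorm_eq q y hy, ← Finset.sum_add_distrib]
    exact Finset.sum_le_sum fun i _ => by
      rw [DFinsupp.add_apply]; exact map_add_le_add (q i) _ _
  neg' x := by
    show ((-x).sum fun i xi => q i xi) = x.sum fun i xi => q i xi
    rw [dsum_seminorm_eq q (-x) (le_of_eq DFinsupp.support_neg),
        dsum_seminorm_eq q x subset_rfl]
    exact Finset.sum_congr rfl fun i _ => by rw [DFinsupp.neg_apply, map_neg_eq_map]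
  smul' a x := by
    show ((a • x).sum fun i xi => q i xi) = ‖a‖ * x.sum fun i xi => q i xi
    have hs : (a • x).support ⊆ x.support := DFinsupp.support_smul a x
    rw [dsum_seminorm_eq q (a • x) hs, dsum_seminorm_eq q x subset_rfl, Finset.mul_sum]
    exact Finset.sum_congr rfl fun i _ => by
      rw [DFinsupp.smul_apply, map_smul_eq_mul]

lemma sumSeminorm_apply (q : ∀ i, Seminorm ℝ (E i)) (x : Π₀ i, E i) :
    sumSeminorm q x = x.sum fun i xi => q i xi := rfl

end SumSeminorm

lemma seminorm_sum_le {α H : Type*} [AddCommGroup H] [Module ℝ H]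
    (p : Seminorm ℝ H) (s : Finset α) (f : α → H) :
    p (∑ i ∈ s, f i) ≤ ∑ i ∈ s, p (f i) := by
  classical
  induction s using Finset.cons_induction with
  | empty => simp
  | cons a s ha ih =>
    rw [Finset.sum_cons, Finset.sum_cons]
    exact (map_add_le_add p _ _).trans (by gcongr)

/-- Lemma on locally convex direct sums (Lemma `specifsum`): given continuous bilinear
maps `B i j : E i × F j → H` such that for every double sequence `(P σ τ)` of continuous
seminorms on `H` there are continuous seminorms `PP i σ` on `E i`, `QQ j τ` on `F j` and
constants `C i j σ τ > 0` with
`P σ τ (B i j x y) ≤ C i j σ τ * PP i σ x * QQ j τ y`,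
the bilinear map `β((x_i), (y_j)) = Σ_{i,j} B i j (x_i) (y_j)` on the locally convex
direct sums `⨁ᵢ E i` and `⨁ⱼ F j` admits product estimates.  Here the direct sums
`Π₀ i, E i` carry (arbitrary) topologies whose continuous seminorms are exactly those
dominated by a sum `x ↦ Σᵢ qᵢ(xᵢ)` with all `qᵢ` continuous, as holds for the locally
convex direct sum topology on a countable direct sum. -/
theorem productEstimates_directSum
    {E : ℕ → Type v} {F : ℕ → Type w} {H : Type u}
    [∀ i, AddCommGroup (E i)] [∀ i, Module ℝ (E i)] [∀ i, TopologicalSpace (E i)]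
    [∀ i, IsTopologicalAddGroup (E i)] [∀ i, ContinuousSMul ℝ (E i)]
    [∀ i, LocallyConvexSpace ℝ (E i)] [∀ i, T2Space (E i)]
    [∀ j, AddCommGroup (F j)] [∀ j, Module ℝ (F j)] [∀ j, TopologicalSpace (F j)]
    [∀ j, IsTopologicalAddGroup (F j)] [∀ j, ContinuousSMul ℝ (F j)]
    [∀ j, LocallyConvexSpace ℝ (F j)] [∀ j, T2Space (F j)]
    [AddCommGroup H] [Module ℝ H] [TopologicalSpace H]
    [IsTopologicalAddGroup H] [ContinuousSMul ℝ H] [LocallyConvexSpace ℝ H] [T2Space H]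
    [∀ i (x : E i), Decidable (x ≠ 0)] [∀ j (y : F j), Decidable (y ≠ 0)]
    [TopologicalSpace (Π₀ i, E i)] [TopologicalSpace (Π₀ j, F j)]
    (hE : ∀ P : Seminorm ℝ (Π₀ i, E i), Continuous P ↔
      ∃ q : ∀ i, Seminorm ℝ (E i), (∀ i, Continuous (q i)) ∧
        ∀ x : Π₀ i, E i, P x ≤ x.sum fun i xi => q i xi)
    (hF : ∀ Q : Seminorm ℝ (Π₀ j, F j), Continuous Q ↔
      ∃ q : ∀ j, Seminorm ℝ (F j), (∀ j, Continuous (q j)) ∧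
        ∀ y : Π₀ j, F j, Q y ≤ y.sum fun j yj => q j yj)
    (B : ∀ i j, E i →ₗ[ℝ] F j →ₗ[ℝ] H)
    (hBcont : ∀ i j, Continuous (fun xy : E i × F j => B i j xy.1 xy.2))
    (hyp : ∀ P : ℕ → ℕ → Seminorm ℝ H, (∀ σ τ, Continuous (P σ τ)) →
      ∃ (PP : ∀ i : ℕ, ℕ → Seminorm ℝ (E i)) (QQ : ∀ j : ℕ, ℕ → Seminorm ℝ (F j))
        (C : ℕ → ℕ → ℕ → ℕ → ℝ),
        (∀ i σ, Continuous (PP i σ)) ∧ (∀ j τ, Continuous (QQ j τ)) ∧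
        (∀ i j σ τ, 0 < C i j σ τ) ∧
        ∀ (i j σ τ : ℕ) (x : E i) (y : F j),
          P σ τ (B i j x y) ≤ C i j σ τ * PP i σ x * QQ j τ y) :
    ProductEstimates (fun (x : Π₀ i, E i) (y : Π₀ j, F j) =>
      x.sum fun i xi => y.sum fun j yj => B i j xi yj) := by
  intro p hp
  obtain ⟨PP, QQ, C, hPPc, hQQc, hCpos, hest⟩ := hyp p hp
  obtain ⟨c, hc1, hc⟩ := exists_scaling
    (fun n m => C (Nat.unpair n).1 (Nat.unpair m).1 (Nat.unpair n).2 (Nat.unpair m).2)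
  set a : ℕ → ℕ → ℝ := fun i σ => c (Nat.pair i σ) with ha
  have ha1 : ∀ i σ, 1 ≤ a i σ := fun i σ => hc1 _
  have ha0 : ∀ i σ, 0 ≤ a i σ := fun i σ => le_trans zero_le_one (ha1 i σ)
  have haC : ∀ i j σ τ, C i j σ τ ≤ a i σ * a j τ := by
    intro i j σ τ
    have := hc (Nat.pair i σ) (Nat.pair j τ)
    simpa [Nat.unpair_pair] using this
  refine ⟨fun σ => sumSeminorm (fun i => (Real.toNNReal (a i σ)) • PP i σ),
          fun τ => sumSeminorm (fun j => (Real.toNNReal (a j τ)) • QQ j τ), ?_, ?_, ?_⟩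
  · intro σ
    refine (hE _).mpr ⟨fun i => (Real.toNNReal (a i σ)) • PP i σ, fun i => ?_,
      fun x => le_of_eq (sumSeminorm_apply _ x)⟩
    have : (⇑((Real.toNNReal (a i σ)) • PP i σ)) = fun x => a i σ * PP i σ x := by
      funext x
      rw [Seminorm.smul_apply, NNReal.smul_def, smul_eq_mul, Real.coe_toNNReal _ (ha0 i σ)]
    rw [this]
    exact continuous_const.mul (hPPc i σ)
  · intro τ
    refine (hF _).mpr ⟨fun j => (Real.toNNReal (a j τ)) • QQ j τ, fun j => ?_,
      fun y => le_of_eq (sumSeminorm_apply _ y)⟩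
    have : (⇑((Real.toNNReal (a j τ)) • QQ j τ)) = fun y => a j τ * QQ j τ y := by
      funext y
      rw [Seminorm.smul_apply, NNReal.smul_def, smul_eq_mul, Real.coe_toNNReal _ (ha0 j τ)]
    rw [this]
    exact continuous_const.mul (hQQc j τ)
  · intro σ τ x y
    have hPapp : sumSeminorm (fun i => (Real.toNNReal (a i σ)) • PP i σ) x
        = ∑ i ∈ x.support, a i σ * PP i σ (x i) := by
      rw [sumSeminorm_apply, DFinsupp.sum]
      exact Finset.sum_congr rfl fun i _ => by
        rw [Seminorm.smul_apply, NNReal.smul_def, smul_eq_mul, Real.coe_toNNReal _ (ha0 i σ)]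
    have hQapp : sumSeminorm (fun j => (Real.toNNReal (a j τ)) • QQ j τ) y
        = ∑ j ∈ y.support, a j τ * QQ j τ (y j) := by
      rw [sumSeminorm_apply, DFinsupp.sum]
      exact Finset.sum_congr rfl fun j _ => by
        rw [Seminorm.smul_apply, NNReal.smul_def, smul_eq_mul, Real.coe_toNNReal _ (ha0 j τ)]
    rw [hPapp, hQapp]
    have hβ : (x.sum fun i xi => y.sum fun j yj => B i j xi yj)
        = ∑ i ∈ x.support, ∑ j ∈ y.support, B i j (x i) (y j) := by
      rw [DFinsupp.sum]
      exact Finset.sum_congr rfl fun i _ => by rw [DFinsupp.sum]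
    calc p σ τ (x.sum fun i xi => y.sum fun j yj => B i j xi yj)
        = p σ τ (∑ i ∈ x.support, ∑ j ∈ y.support, B i j (x i) (y j)) := by rw [hβ]
      _ ≤ ∑ i ∈ x.support, p σ τ (∑ j ∈ y.support, B i j (x i) (y j)) :=
          seminorm_sum_le _ _ _
      _ ≤ ∑ i ∈ x.support, ∑ j ∈ y.support, p σ τ (B i j (x i) (y j)) :=
          Finset.sum_le_sum fun i _ => seminorm_sum_le _ _ _
      _ ≤ ∑ i ∈ x.support, ∑ j ∈ y.support,
            (a i σ * PP i σ (x i)) * (a j τ * QQ j τ (y j)) := by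
          refine Finset.sum_le_sum fun i _ => Finset.sum_le_sum fun j _ => ?_
          have h1 := hest i j σ τ (x i) (y j)
          have h2 : C i j σ τ * PP i σ (x i) * QQ j τ (y j)
              ≤ (a i σ * a j τ) * (PP i σ (x i) * QQ j τ (y j)) := by
            rw [mul_assoc]
            exact mul_le_mul_of_nonneg_right (haC i j σ τ)
              (mul_nonneg (apply_nonneg _ _) (apply_nonneg _ _))
          calc p σ τ (B i j (x i) (y j)) ≤ _ := h1
            _ ≤ (a i σ * a j τ) * (PP i σ (x i) * QQ j τ (y j)) := h2
            _ = (a i σ * PP i σ (x i)) * (a j τ * QQ j τ (y j)) := by ring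
      _ = (∑ i ∈ x.support, a i σ * PP i σ (x i)) *
            (∑ j ∈ y.support, a j τ * QQ j τ (y j)) := by
          rw [Finset.sum_mul_sum]
end

section
/- Let M be an uncountable set and E = ℝ^(M) be the space of finitely supported real-valued functions on M, equipped with the locally convex topology defined by the seminorms p_v(γ) = max{v(m)|γ(m)| : m ∈ M}, where v ranges over all functions v : M → [0,∞) with countable support. Then E admits no continuous norm, and every bounded subset B of E is contained in ℝ^F for some finite subset F ⊆ M. -/
open scoped ENNReal

/-- For a weight `v : M → ℝ`, the linear embedding `γ ↦ (m ↦ v m * γ m)` of the space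
`ℝ^(M)` of finitely supported functions into `ℓ^∞(M)`.  The topology induced by this map
is the topology of the seminorm `p_v(γ) = sup { v m * |γ m| : m ∈ M }`. -/
noncomputable def weightedEmbed {M : Type*} (v : M → ℝ) (γ : M →₀ ℝ) :
    lp (fun _ : M => ℝ) ∞ :=
  ⟨fun m => v m * γ m, by
    apply memℓp_infty
    have hsub : (Set.range fun m => ‖v m * γ m‖) ⊆
        insert 0 ((fun m => ‖v m * γ m‖) '' (γ.support : Set M)) := by
      rintro x ⟨m, rfl⟩
      by_cases h : γ m = 0
      · simp [h]
      · exact Set.mem_insert_of_mem _ ⟨m, Finsupp.mem_support_iff.2 h, rfl⟩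
    exact (((γ.support.finite_toSet.image _).insert 0).bddAbove).mono hsub⟩

/-- The topology on `E = ℝ^(M)`: the initial topology with respect to the maps
`γ ↦ v·γ ∈ ℓ^∞(M)` for all weights `v : M → [0,∞)` with countable support;
equivalently, the topology defined by the seminorms
`p_v(γ) = max { v m * |γ m| : m ∈ M }`. -/
noncomputable instance finsuppWeightedTopology (M : Type*) : TopologicalSpace (M →₀ ℝ) :=
  ⨅ v : {v : M → ℝ // (∀ m, 0 ≤ v m) ∧ (Function.support v).Countable},
    TopologicalSpace.induced (weightedEmbed v.1) inferInstance


section Aux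

open scoped ENNReal

lemma weightedEmbed_apply {M : Type*} (v : M → ℝ) (γ : M →₀ ℝ) (x : M) :
    (weightedEmbed v γ : ∀ _ : M, ℝ) x = v x * γ x := rfl

lemma weightedEmbed_zero {M : Type*} (v : M → ℝ) : weightedEmbed v 0 = 0 := by
  apply lp.ext
  funext x
  simp [weightedEmbed_apply]

lemma weightedEmbed_smul {M : Type*} (v : M → ℝ) (a : ℝ) (γ : M →₀ ℝ) :
    weightedEmbed v (a • γ) = a • weightedEmbed v γ := by
  apply lp.ext
  rw [lp.coeFn_smul]
  funext x
  simp only [weightedEmbed_apply, Pi.smul_apply, Finsupp.smul_apply, smul_eq_mul]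
  ring

/-- The neighborhood filter of `0` in the weighted topology. -/
lemma finsupp_nhds_zero (M : Type*) :
    nhds (0 : M →₀ ℝ) =
      ⨅ v : {v : M → ℝ // (∀ m, 0 ≤ v m) ∧ (Function.support v).Countable},
        Filter.comap (weightedEmbed v.1) (nhds (weightedEmbed v.1 0)) := by
  have h := @nhds_iInf (M →₀ ℝ)
    {v : M → ℝ // (∀ m, 0 ≤ v m) ∧ (Function.support v).Countable}
    (fun v => TopologicalSpace.induced (weightedEmbed v.1) inferInstance) 0
  refine h.trans ?_
  exact iInf_congr fun v => nhds_induced (weightedEmbed v.1) 0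

end Aux

open scoped Pointwise

/-- For an uncountable set `M`, the space `E = ℝ^(M)` of finitely supported real
functions with the above topology admits no continuous norm, and every von
Neumann-bounded subset `B ⊆ E` is contained in `ℝ^F` for some finite `F ⊆ M`
(i.e. all elements of `B` are supported in a common finite set). -/
theorem finsupp_no_continuous_norm_and_bounded_finite_support
    (M : Type*) [Uncountable M] :
    (¬ ∃ N : Seminorm ℝ (M →₀ ℝ), Continuous N ∧ ∀ γ, N γ = 0 → γ = 0) ∧
    ∀ B : Set (M →₀ ℝ), Bornology.IsVonNBounded ℝ B →
      ∃ s : Finset M, ∀ γ ∈ B, γ.support ⊆ s := by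
  classical
  constructor
  · rintro ⟨N, hNc, hN⟩
    -- the open unit "ball" of N is a neighborhood of 0
    have hU : {γ : M →₀ ℝ | N γ < 1} ∈ nhds (0 : M →₀ ℝ) := by
      have ho : IsOpen {γ : M →₀ ℝ | N γ < 1} :=
        isOpen_lt hNc continuous_const
      exact ho.mem_nhds (by simp)
    rw [finsupp_nhds_zero] at hU
    obtain ⟨I, hIfin, V, hV, hUeq⟩ := Filter.mem_iInf.1 hU
    -- the union of the supports of the finitely many weights is countable
    have hS : (⋃ i ∈ I, Function.support (i.1)).Countable :=
      hIfin.countable.biUnion fun i _ => i.2.2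
    -- pick a point m outside all the supports
    have hex : ∃ m : M, m ∉ ⋃ i ∈ I, Function.support (i.1) := by
      by_contra h
      push_neg at h
      exact not_countable (Set.countable_univ_iff.1
        (hS.mono fun x _ => h x))
    obtain ⟨m, hm⟩ := hex
    -- every multiple of `single m 1` lies in every V i
    have key : ∀ c : ℝ, N (c • Finsupp.single m (1:ℝ)) < 1 := by
      intro c
      have hmem : c • Finsupp.single m (1:ℝ) ∈ {γ : M →₀ ℝ | N γ < 1} := by
        rw [hUeq]
        refine Set.mem_iInter.2 fun i => ?_
        obtain ⟨W, hW, hWsub⟩ := Filter.mem_comap.1 (hV i)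
        apply hWsub
        have hvm : ((i : Set.Elem I) : {v : M → ℝ // (∀ m, 0 ≤ v m) ∧
            (Function.support v).Countable}).1 m = 0 := by
          by_contra hne
          exact hm (Set.mem_biUnion (i : Set.Elem I).2 hne)
        have heq : weightedEmbed ((i : Set.Elem I) : {v : M → ℝ // (∀ m, 0 ≤ v m) ∧
            (Function.support v).Countable}).1 (c • Finsupp.single m (1:ℝ)) =
            weightedEmbed ((i : Set.Elem I) : {v : M → ℝ // (∀ m, 0 ≤ v m) ∧
            (Function.support v).Countable}).1 0 := by
          apply lp.ext
          funext x
          simp only [weightedEmbed_apply]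
          by_cases hx : x = m
          · subst hx; rw [hvm]; ring
          · simp [Finsupp.single_apply, Ne.symm hx]
        rw [Set.mem_preimage, heq]
        exact mem_of_mem_nhds hW
      exact hmem
    -- hence N (single m 1) = 0
    have hN0 : N (Finsupp.single m (1:ℝ)) = 0 := by
      by_contra h
      have hpos : 0 < N (Finsupp.single m (1:ℝ)) :=
        lt_of_le_of_ne (apply_nonneg N _) (Ne.symm h)
      have hkey := key (1 / N (Finsupp.single m (1:ℝ)))
      rw [map_smul_eq_mul] at hkey
      rw [Real.norm_eq_abs, abs_of_pos (by positivity), one_div,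
        inv_mul_cancel₀ (ne_of_gt hpos)] at hkey
      exact lt_irrefl 1 hkey
    have hzero : Finsupp.single m (1:ℝ) = 0 := hN _ hN0
    exact one_ne_zero (Finsupp.single_eq_zero.1 hzero)
  · intro B hB
    by_contra hns
    push_neg at hns
    -- for every finite s there is γ ∈ B with support not contained in s
    have hns' : ∀ s : Finset M, ∃ γ, γ ∈ B ∧ ¬ γ.support ⊆ s := by
      intro s
      obtain ⟨γ, hγB, hsub⟩ := hns s
      exact ⟨γ, hγB, hsub⟩
    set g : Finset M → (M →₀ ℝ) := fun s => (hns' s).choose with hg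
    have hg1 : ∀ s, g s ∈ B := fun s => (hns' s).choose_spec.1
    have hg2 : ∀ s, ¬ (g s).support ⊆ s := fun s => (hns' s).choose_spec.2
    -- the recursively defined increasing finite sets
    set t : ℕ → Finset M := fun n => Nat.rec ∅ (fun _ sk => sk ∪ (g sk).support) n with ht
    have htsucc : ∀ n, t (n + 1) = t n ∪ (g (t n)).support := fun n => rfl
    set γ : ℕ → (M →₀ ℝ) := fun n => g (t n) with hγdef
    have hpt : ∀ n, ∃ x ∈ (γ n).support, x ∉ t n := fun n =>
      Finset.not_subset.1 (hg2 (t n))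
    set m' : ℕ → M := fun n => (hpt n).choose with hm'
    have hmem : ∀ n, m' n ∈ (γ n).support := fun n => (hpt n).choose_spec.1
    have hnot : ∀ n, m' n ∉ t n := fun n => (hpt n).choose_spec.2
    have hmono : Monotone t := by
      apply monotone_nat_of_le_succ
      intro n
      rw [htsucc]
      exact Finset.subset_union_left
    have hin : ∀ k n, k < n → m' k ∈ t n := by
      intro k n hkn
      have h1 : m' k ∈ t (k + 1) := by
        rw [htsucc]
        exact Finset.mem_union_right _ (hmem k)
      exact hmono hkn h1
    have hinj : Function.Injective m' := by
      intro a b hab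
      rcases lt_trichotomy a b with h | h | h
      · exact absurd (hab ▸ hin a b h) (hnot b)
      · exact h
      · exact absurd (hab.symm ▸ hin b a h) (hnot a)
    -- the weight
    set v : M → ℝ := fun x => if h : ∃ k, m' k = x then
        ((h.choose : ℝ) + 1) / |γ h.choose x| else 0 with hv
    have hv1 : ∀ x, 0 ≤ v x := by
      intro x
      rw [hv]
      dsimp only
      split
      · positivity
      · exact le_refl 0
    have hv2 : (Function.support v).Countable := by
      apply Set.Countable.mono _ (Set.countable_range m')
      intro x hx
      rw [Function.mem_support] at hx
      by_contra hr
      apply hx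
      rw [hv]
      dsimp only
      rw [dif_neg]
      rintro ⟨k, rfl⟩
      exact hr ⟨k, rfl⟩
    have hvval : ∀ k, v (m' k) = ((k : ℝ) + 1) / |γ k (m' k)| := by
      intro k
      have hexk : ∃ j, m' j = m' k := ⟨k, rfl⟩
      have hch : hexk.choose = k := hinj hexk.choose_spec
      rw [hv]
      dsimp only
      rw [dif_pos hexk, hch]
    have hγne : ∀ k, γ k (m' k) ≠ 0 := fun k => Finsupp.mem_support_iff.1 (hmem k)
    -- the preimage of the closed unit ball is a neighborhood of 0
    set V' : Set (M →₀ ℝ) := weightedEmbed v ⁻¹' Metric.closedBall 0 1 with hV'def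
    have hV'nhds : V' ∈ nhds (0 : M →₀ ℝ) := by
      rw [finsupp_nhds_zero]
      apply Filter.mem_iInf_of_mem ⟨v, hv1, hv2⟩
      apply Filter.preimage_mem_comap
      rw [weightedEmbed_zero]
      exact Metric.closedBall_mem_nhds 0 one_pos
    obtain ⟨r, hr⟩ := absorbs_iff_norm.1 (hB hV'nhds)
    set a : ℝ := max r 1 with ha
    have ha1 : (1:ℝ) ≤ a := le_max_right r 1
    have hapos : 0 < a := lt_of_lt_of_le one_pos ha1
    have hBa : B ⊆ a • V' := hr a (by
      rw [Real.norm_eq_abs, abs_of_pos hapos]; exact le_max_left r 1)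
    set n : ℕ := ⌈a⌉₊ with hn
    obtain ⟨δ, hδ, hγδ⟩ := hBa (hg1 (t n))
    have hδball : ‖weightedEmbed v δ‖ ≤ 1 := mem_closedBall_zero_iff.1 hδ
    -- the norm of weightedEmbed v (γ n) is at least n + 1
    have hlow : ((n : ℝ) + 1) ≤ ‖weightedEmbed v (γ n)‖ := by
      have h1 := lp.norm_apply_le_norm (by simp : (∞ : ℝ≥0∞) ≠ 0)
        (weightedEmbed v (γ n)) (m' n)
      have h2 : ‖(weightedEmbed v (γ n) : ∀ _ : M, ℝ) (m' n)‖ = (n : ℝ) + 1 := by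
        rw [weightedEmbed_apply, Real.norm_eq_abs, abs_mul, hvval n,
          abs_of_nonneg (show (0:ℝ) ≤ ((n:ℝ)+1)/|γ n (m' n)| by positivity),
          div_mul_cancel₀ _ (abs_ne_zero.2 (hγne n))]
      rw [← h2]
      exact h1
    -- but it is also at most a
    have hup : ‖weightedEmbed v (γ n)‖ ≤ a := by
      have heq : γ n = a • δ := hγδ.symm
      rw [heq, weightedEmbed_smul, lp.norm_const_smul (by simp : (∞ : ℝ≥0∞) ≠ 0),
        Real.norm_eq_abs, abs_of_pos hapos]
      calc a * ‖weightedEmbed v δ‖ ≤ a * 1 :=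
            mul_le_mul_of_nonneg_left hδball (le_of_lt hapos)
        _ = a := mul_one a
    have hca : a ≤ (n : ℝ) := Nat.le_ceil a
    linarith
end
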